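/- arXiv:0809.0603 — 2 statements merged into one kernel-verified Lean document; each statement's English description precedes it below -/
import Mathlib

section
/- Let u be an aperiodic uniformly recurrent infinite word. If there exist infinitely many factors w of u such that R(|w|) = |w|·ind(w) + 1, then u is Sturmian (i.e., C(n) = n+1 for all n). -/
open Filter Topology

namespace SturmianPaper

variable {A : Type*} [DecidableEq A]

/-- The factor `w` occurs in the infinite word `u` at position `i`. -/
def FactorAt (u : ℕ → A) (w : List A) (i : ℕ) : Prop :=
  w = (List.range w.length).map fun j => u (i + j)

/-- `w` is a factor of the infinite word `u`. -/
def IsFactor (u : ℕ → A) (w : List A) : Prop := ∃ i, FactorAt u w i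

/-- The factor complexity of `u`: the number of factors of length `n`. -/
noncomputable def complexity (u : ℕ → A) (n : ℕ) : ℕ :=
  Set.ncard {w : List A | IsFactor u w ∧ w.length = n}

/-- A Sturmian word: complexity `n + 1` for every `n` (this forces aperiodicity). -/
def IsSturmian (u : ℕ → A) : Prop := ∀ n, complexity u n = n + 1

/-- `u` is eventually periodic. -/
def EventuallyPeriodic (u : ℕ → A) : Prop :=
  ∃ p > 0, ∃ N, ∀ n ≥ N, u (n + p) = u n

/-- `u` is uniformly recurrent: every factor occurs with bounded gaps. -/
def UniformlyRecurrent (u : ℕ → A) : Prop :=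
  ∀ w, IsFactor u w → ∃ B, ∀ k, ∃ i, k ≤ i ∧ i < k + B ∧ FactorAt u w i

/-- The number of occurrences of `w` in the finite word `x`. -/
def occCount (x w : List A) : ℕ :=
  ((List.range (x.length + 1)).filter fun i => decide (w <+: x.drop i)).length

/-- `v` is a return word of the factor `w` of `u`. -/
def IsReturnWord (u : ℕ → A) (w v : List A) : Prop :=
  v ≠ [] ∧ IsFactor u (v ++ w) ∧ w <+: v ++ w ∧ occCount (v ++ w) w = 2

/-- Recurrence function: `R n + 1` is the maximal length of a complete return word
`v ++ w` over factors `w` of length `n` and return words `v` of `w`. -/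
noncomputable def recFun (u : ℕ → A) (n : ℕ) : ℕ :=
  sSup {m | ∃ w v, IsFactor u w ∧ w.length = n ∧ IsReturnWord u w v ∧
    m + 1 = v.length + w.length}

/-- `v = w ^ (|v| / |w|)`: `v` is a fractional power of `w`,
i.e. a prefix of `w w w ⋯` of length at least `|w|`. -/
def FracPow (w v : List A) : Prop :=
  w ≠ [] ∧ w.length ≤ v.length ∧ ∀ i < v.length, v[i]? = w[i % w.length]?

/-- The set of rational exponents `r` (viewed inside `ℝ`) such that `w ^ r ∈ L(u)`. -/
def expSet (u : ℕ → A) (w : List A) : Set ℝ :=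
  {r | ∃ v, IsFactor u v ∧ FracPow w v ∧ r = (v.length : ℝ) / (w.length : ℝ)}

/-- The index of the factor `w` in `u`: `sup {r ∈ ℚ | w ^ r ∈ L(u)}`. -/
noncomputable def index (u : ℕ → A) (w : List A) : ℝ := sSup (expSet u w)

/-- A finite word is primitive if it is not a proper integer power. -/
def Primitive (w : List A) : Prop :=
  w ≠ [] ∧ ∀ (z : List A) (k : ℕ), 2 ≤ k → w ≠ (List.replicate k z).flatten

/-- `w` is left special in `u` (alphabet `Bool`, `true = A`, `false = B`). -/
def LeftSpecial (u : ℕ → Bool) (w : List Bool) : Prop :=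
  IsFactor u (true :: w) ∧ IsFactor u (false :: w)

/-- `w` is right special in `u`. -/
def RightSpecial (u : ℕ → Bool) (w : List Bool) : Prop :=
  IsFactor u (w ++ [true]) ∧ IsFactor u (w ++ [false])

/-- The Sturmian word of slope `α` and intercept `x₀`, coding the orbit of `x₀`
under the exchange of the two intervals `I_A = [0, α)` (coded `true`) and
`I_B = [α, 1)` (coded `false`); the exchange is the rotation `x ↦ x + (1 - α) mod 1`. -/
noncomputable def sturmianWord (α x₀ : ℝ) : ℕ → Bool :=
  fun n => decide (Int.fract (x₀ + n * (1 - α)) < α)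

/-- The Sturmian morphism `A ↦ AᶜB`, `B ↦ A` applied to a finite word. -/
def phiW (c : ℕ) (w : List Bool) : List Bool :=
  (w.map fun b => if b then List.replicate c true ++ [false] else [true]).flatten

/-- The Sturmian morphism `A ↦ AᶜB`, `B ↦ A` applied to an infinite word. -/
noncomputable def phiInf (c : ℕ) (u : ℕ → Bool) : ℕ → Bool :=
  fun n => (phiW c ((List.range (n + 1)).map u)).getD n false

/-! ### Auxiliary machinery -/

set_option linter.unusedSectionVars false
set_option linter.deprecated false


/-- The window word `u[i..i+n)`. -/
private def win (u : ℕ → A) (i n : ℕ) : List A := (List.range n).map fun t => u (i + t)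

@[simp] private lemma win_length (u : ℕ → A) (i n : ℕ) : (win u i n).length = n := by
  simp [win]

private lemma win_getElem? (u : ℕ → A) (i n t : ℕ) (ht : t < n) :
    (win u i n)[t]? = some (u (i + t)) := by
  simp [win, ht]

private lemma factorAt_win (u : ℕ → A) (i n : ℕ) : FactorAt u (win u i n) i := by
  show win u i n = (List.range (win u i n).length).map fun j => u (i + j)
  rw [win_length]
  rfl

private lemma factorAt_iff_win {u : ℕ → A} {w : List A} {i n : ℕ} (hn : w.length = n) :
    FactorAt u w i ↔ w = win u i n := by subst hn; exact Iff.rfl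

private lemma win_append (u : ℕ → A) (i a b : ℕ) :
    win u i (a + b) = win u i a ++ win u (i + a) b := by
  simp only [win, List.range_add, List.map_append, List.map_map]
  congr 1
  apply List.map_congr_left
  intro t _
  simp [Function.comp, Nat.add_assoc]

private lemma win_take (u : ℕ → A) (i : ℕ) {m n : ℕ} (h : m ≤ n) :
    (win u i n).take m = win u i m := by
  have hn : n = m + (n - m) := by omega
  rw [hn, win_append]
  rw [List.take_left' (win_length u i m)]

private lemma win_drop (u : ℕ → A) (i : ℕ) (m n : ℕ) :
    (win u i n).drop m = win u (i + m) (n - m) := by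
  rcases le_or_gt m n with h | h
  · have hn : n = m + (n - m) := by omega
    rw [hn, win_append]
    have : n - (m + (n-m)) = 0 := by omega
    rw [List.drop_left' (win_length u i m)]
    congr 1
    omega
  · have h1 : n - m = 0 := by omega
    rw [h1]
    have : (win u i n).length ≤ m := by rw [win_length]; omega
    rw [List.drop_eq_nil_iff.mpr this]
    rfl

private lemma win_inj_apply {u : ℕ → A} {i j m : ℕ} (h : win u i m = win u j m)
    {t : ℕ} (ht : t < m) : u (i + t) = u (j + t) := by
  have := congrArg (fun l => l[t]?) h
  simp only [win_getElem? _ _ _ _ ht] at this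
  exact Option.some.inj this

private lemma win_getElem (u : ℕ → A) (i n t : ℕ) (h : t < (win u i n).length) :
    (win u i n)[t] = u (i + t) := by
  simp [win]

private lemma prefix_win_iff {u : ℕ → A} {w' : List A} {N : ℕ} (j : ℕ) :
    w' <+: win u j N ↔ w'.length ≤ N ∧ w' = win u j w'.length := by
  constructor
  · intro h
    have hl : w'.length ≤ N := by simpa using h.length_le
    refine ⟨hl, ?_⟩
    have h2 := List.prefix_iff_eq_take.mp h
    rwa [win_take _ _ hl] at h2
  · rintro ⟨hl, hw⟩
    have h2 : win u j N = win u j w'.length ++ win u (j + w'.length) (N - w'.length) := by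
      rw [← win_append]; congr 1; omega
    rw [h2]
    conv_lhs => rw [hw]
    exact List.prefix_append _ _

private lemma append_eq_win {u : ℕ → A} {w' : List A} {i j : ℕ} (hij : i ≤ j)
    (hj : FactorAt u w' j) :
    win u i (j - i) ++ w' = win u i (j - i + w'.length) := by
  rw [win_append, show i + (j - i) = j from by omega,
    ← (factorAt_iff_win rfl).mp hj]

private lemma occCount_eq_two {u : ℕ → A} {w' : List A} {n i j : ℕ}
    (hn : w'.length = n) (hn0 : 0 < n) (hij : i < j)
    (hi : FactorAt u w' i) (hj : FactorAt u w' j)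
    (hcons : ∀ t, i < t → t < j → ¬ FactorAt u w' t) :
    occCount (win u i (j - i) ++ w') w' = 2 := by
  have hx : win u i (j - i) ++ w' = win u i (j - i + n) := by
    rw [append_eq_win hij.le hj, hn]
  unfold occCount
  rw [hx, win_length]
  have key : ∀ t ∈ List.range (j - i + n + 1),
      (decide (w' <+: (win u i (j - i + n)).drop t)) = decide (t = 0 ∨ t = j - i) := by
    intro t ht
    rw [List.mem_range] at ht
    rw [decide_eq_decide, win_drop, prefix_win_iff]
    constructor
    · rintro ⟨hl, hw⟩
      rw [hn] at hl hw
      have hFa : FactorAt u w' (i + t) := (factorAt_iff_win hn).mpr hw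
      by_contra hne
      push_neg at hne
      exact hcons (i + t) (by omega) (by omega) hFa
    · rintro (rfl | rfl)
      · constructor
        · omega
        · rw [hn]
          simpa using (factorAt_iff_win hn).mp hi
      · constructor
        · omega
        · rw [hn, show i + (j - i) = j from by omega]
          exact (factorAt_iff_win hn).mp hj
  rw [List.filter_congr key]
  have hnd : ((List.range (j - i + n + 1)).filter
      (fun t => decide (t = 0 ∨ t = j - i))).Nodup :=
    List.nodup_range.filter _
  rw [← List.toFinset_card_of_nodup hnd, List.toFinset_filter]
  have hrange : (List.range (j - i + n + 1)).toFinset = Finset.range (j - i + n + 1) := by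
    ext t; simp
  rw [hrange]
  have hset : (Finset.range (j - i + n + 1)).filter
      (fun t => decide (t = 0 ∨ t = j - i) = true) = {0, j - i} := by
    ext t
    simp only [Finset.mem_filter, Finset.mem_range, decide_eq_true_eq,
      Finset.mem_insert, Finset.mem_singleton]
    omega
  rw [hset]
  exact Finset.card_pair (by omega)

/-- The set whose `sSup` is `recFun u n`. -/
private def RS (u : ℕ → A) (n : ℕ) : Set ℕ :=
  {m | ∃ w v, IsFactor u w ∧ w.length = n ∧ IsReturnWord u w v ∧
    m + 1 = v.length + w.length}

private lemma recFun_eq (u : ℕ → A) (n : ℕ) : recFun u n = sSup (RS u n) := rfl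

private lemma mem_RS {u : ℕ → A} {w' : List A} {i j : ℕ}
    (hne : w' ≠ []) (hij : i < j) (hi : FactorAt u w' i) (hj : FactorAt u w' j)
    (hcons : ∀ t, i < t → t < j → ¬ FactorAt u w' t) :
    (j - i + w'.length - 1) ∈ RS u w'.length := by
  have hn0 : 0 < w'.length := List.length_pos_iff.mpr hne
  refine ⟨w', win u i (j - i), ⟨i, hi⟩, rfl, ⟨?_, ?_, ?_, ?_⟩, ?_⟩
  · intro hnil
    have := win_length u i (j - i)
    rw [hnil] at this
    simp at this
    omega
  · rw [append_eq_win hij.le hj]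
    exact ⟨i, factorAt_win u i _⟩
  · rw [append_eq_win hij.le hj]
    rw [prefix_win_iff]
    exact ⟨by omega, (factorAt_iff_win rfl).mp hi⟩
  · exact occCount_eq_two rfl hn0 hij hi hj hcons
  · rw [win_length]
    omega

private lemma exists_occ_ge {u : ℕ → A} (hur : UniformlyRecurrent u) {w : List A}
    (hf : IsFactor u w) (k : ℕ) : ∃ i, k ≤ i ∧ FactorAt u w i := by
  obtain ⟨B, hB⟩ := hur w hf
  obtain ⟨i, h1, _, h3⟩ := hB k
  exact ⟨i, h1, h3⟩

private lemma exists_next {u : ℕ → A} (hur : UniformlyRecurrent u) {w' : List A}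
    (hf : IsFactor u w') (i : ℕ) :
    ∃ j, i < j ∧ FactorAt u w' j ∧ ∀ t, i < t → t < j → ¬ FactorAt u w' t := by
  classical
  have hex : ∃ j, i + 1 ≤ j ∧ FactorAt u w' j := exists_occ_ge hur hf (i + 1)
  refine ⟨Nat.find hex, by have := (Nat.find_spec hex).1; omega, (Nat.find_spec hex).2, ?_⟩
  intro t ht1 ht2 hFt
  exact Nat.find_min hex ht2 ⟨by omega, hFt⟩

private lemma occ_in_window {u : ℕ → A} (hur : UniformlyRecurrent u) {w' : List A}
    (hf : IsFactor u w') {g : ℕ} (hg : 1 ≤ g)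
    (hgap : ∀ a b, FactorAt u w' a → FactorAt u w' b → a < b →
      (∀ t, a < t → t < b → ¬ FactorAt u w' t) → b - a ≤ g)
    {j0 i : ℕ} (h0 : FactorAt u w' j0) (h0i : j0 ≤ i) :
    ∃ j, i ≤ j ∧ j < i + g ∧ FactorAt u w' j := by
  classical
  have hex : ∃ j, i ≤ j ∧ FactorAt u w' j := exists_occ_ge hur hf i
  obtain ⟨hij, hFj⟩ := Nat.find_spec hex
  rcases eq_or_lt_of_le hij with heq | hlt
  · exact ⟨Nat.find hex, hij, by omega, hFj⟩
  · set j := Nat.find hex with hjdef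
    set j' := Nat.findGreatest (fun t => FactorAt u w' t) (j - 1) with hj'def
    have hPj' : FactorAt u w' j' := Nat.findGreatest_spec (m := j0) (by omega) h0
    have hj'le : j' ≤ j - 1 := Nat.findGreatest_le _
    have hj'lti : j' < i := by
      by_contra hge
      push_neg at hge
      have : j ≤ j' := Nat.find_min' hex ⟨hge, hPj'⟩
      omega
    have hconsec : ∀ t, j' < t → t < j → ¬ FactorAt u w' t := by
      intro t ht1 ht2 hFt
      have : t ≤ j' := Nat.le_findGreatest (by omega) hFt
      omega
    have hgapb : j - j' ≤ g := hgap j' j hPj' hFj (by omega) hconsec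
    exact ⟨j, hij, by omega, hFj⟩

private lemma pattern_eq {u : ℕ → A} {w z : List A} {i : ℕ}
    (hfp : FracPow w z) (hzi : FactorAt u z i) {t : ℕ} (ht : t < z.length) :
    u (i + t) = u (i + t % w.length) := by
  obtain ⟨hw0, hlen, hspec⟩ := hfp
  have hn0 : 0 < w.length := List.length_pos_iff.mpr hw0
  have hz : z = win u i z.length := hzi
  have hget : ∀ s, s < z.length → z[s]? = some (u (i + s)) := by
    intro s hs
    conv_lhs => rw [hz]
    exact win_getElem? u i z.length s hs
  have hmlt : t % w.length < z.length := lt_of_lt_of_le (Nat.mod_lt _ hn0) hlen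
  have e1 := hspec t ht
  have e2 := hspec (t % w.length) hmlt
  rw [hget t ht] at e1
  rw [hget _ hmlt] at e2
  rw [Nat.mod_mod_of_dvd t dvd_rfl] at e2
  exact Option.some.inj (e1.trans e2.symm)

/-- The set of lengths of fractional powers of `w` in `u`. -/
private def Sset (u : ℕ → A) (w : List A) : Set ℕ :=
  {m | ∃ v, IsFactor u v ∧ FracPow w v ∧ v.length = m}

private lemma expSet_eq (u : ℕ → A) (w : List A) :
    expSet u w = (fun m : ℕ => (m : ℝ) / (w.length : ℝ)) '' Sset u w := by
  ext r
  constructor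
  · rintro ⟨v, h1, h2, h3⟩
    exact ⟨v.length, ⟨v, h1, h2, rfl⟩, h3.symm⟩
  · rintro ⟨m, ⟨v, h1, h2, rfl⟩, rfl⟩
    exact ⟨v, h1, h2, rfl⟩

private lemma self_mem_Sset {u : ℕ → A} {w : List A} (hw : IsFactor u w) (hw0 : w ≠ []) :
    w.length ∈ Sset u w :=
  ⟨w, hw, ⟨hw0, le_rfl, fun i hi => by rw [Nat.mod_eq_of_lt hi]⟩, rfl⟩

private lemma index_eq_of_bdd {u : ℕ → A} {w : List A} (hw : IsFactor u w) (hw0 : w ≠ [])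
    (hB : BddAbove (Sset u w)) :
    index u w = ((sSup (Sset u w) : ℕ) : ℝ) / (w.length : ℝ) := by
  have hne : (Sset u w).Nonempty := ⟨_, self_mem_Sset hw hw0⟩
  have hmem := Nat.sSup_mem hne hB
  have hn0 : (0 : ℝ) < (w.length : ℝ) := by
    have := List.length_pos_iff.mpr hw0
    exact_mod_cast this
  apply IsGreatest.csSup_eq
  constructor
  · rw [expSet_eq]
    exact ⟨_, hmem, rfl⟩
  · intro r hr
    rw [expSet_eq] at hr
    obtain ⟨m, hm, rfl⟩ := hr
    have hle : (m : ℝ) ≤ ((sSup (Sset u w) : ℕ) : ℝ) := by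
      exact_mod_cast le_csSup hB hm
    exact (div_le_div_iff_of_pos_right hn0).mpr hle

private lemma index_eq_zero_of_unbdd {u : ℕ → A} {w : List A} (hw0 : w ≠ [])
    (hB : ¬ BddAbove (Sset u w)) : index u w = 0 := by
  have hn0 : (0 : ℝ) < (w.length : ℝ) := by
    have := List.length_pos_iff.mpr hw0
    exact_mod_cast this
  have hexp : ¬ BddAbove (expSet u w) := by
    rintro ⟨M, hM⟩
    apply hB
    refine ⟨w.length * (⌈M⌉₊ + 1), ?_⟩
    rintro m hm
    have h1 : (m : ℝ) / (w.length : ℝ) ≤ M := by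
      apply hM
      rw [expSet_eq]
      exact ⟨m, hm, rfl⟩
    have h2 : (m : ℝ) ≤ (w.length : ℝ) * M := by
      rw [div_le_iff₀ hn0] at h1
      linarith
    have h3 : (m : ℝ) ≤ (w.length : ℝ) * ((⌈M⌉₊ : ℝ) + 1) := by
      have := Nat.le_ceil M
      nlinarith
    have : (m : ℝ) ≤ ((w.length * (⌈M⌉₊ + 1) : ℕ) : ℝ) := by push_cast; linarith
    exact_mod_cast this
  exact Real.sSup_of_not_bddAbove hexp

/-- Key lemma: at a "good" length `n = |w|` (where the recurrence/index equation holds),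
the set of factors of length `n` is finite with at most `n + 1` elements. -/
private lemma good_count {u : ℕ → A} (hap : ¬ EventuallyPeriodic u)
    (hur : UniformlyRecurrent u) {w : List A} (hw : IsFactor u w) (hw0 : w ≠ [])
    (heq : (recFun u w.length : ℝ) = (w.length : ℝ) * index u w + 1) :
    {x : List A | IsFactor u x ∧ x.length = w.length}.Finite ∧
      Set.ncard {x : List A | IsFactor u x ∧ x.length = w.length} ≤ w.length + 1 := by
  classical
  set n := w.length with hndef
  have hn0 : 0 < n := List.length_pos_iff.mpr hw0
  by_cases hB : BddAbove (Sset u w)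
  swap
  · -- degenerate case: the power lengths are unbounded; derive a contradiction
    exfalso
    rw [index_eq_zero_of_unbdd hw0 hB] at heq
    simp only [mul_zero, zero_add] at heq
    have hrec : recFun u n = 1 := by exact_mod_cast heq
    have hRSbdd : BddAbove (RS u n) := by
      by_contra hnb
      have : recFun u n = 0 := by
        rw [recFun_eq, csSup_of_not_bddAbove hnb, csSup_empty]
        rfl
      omega
    apply hap
    have key : ∀ i : ℕ, u (i + 1) = u i := by
      intro i
      have hFi : FactorAt u (win u i n) i := factorAt_win u i n
      have hf : IsFactor u (win u i n) := ⟨i, hFi⟩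
      have hne : win u i n ≠ [] := by
        intro hnil
        have := win_length u i n
        rw [hnil] at this
        simp at this
        omega
      obtain ⟨j, hij, hFj, hcons⟩ := exists_next hur hf i
      have hmem := mem_RS hne hij hFi hFj hcons
      rw [win_length] at hmem
      have hle : j - i + n - 1 ≤ recFun u n := by
        rw [recFun_eq]
        exact le_csSup hRSbdd hmem
      have hn1 : n = 1 := by omega
      have hji : j = i + 1 := by omega
      have hwin : win u i n = win u j n := (factorAt_iff_win (win_length u i n)).mp hFj
      have := win_inj_apply hwin (t := 0) hn0
      rw [hji] at this
      simpa using this.symm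
    exact ⟨1, one_pos, 0, fun m _ => key m⟩
  -- main case
  have hne : (Sset u w).Nonempty := ⟨_, self_mem_Sset hw hw0⟩
  set L := sSup (Sset u w) with hLdef
  have hLmem : L ∈ Sset u w := Nat.sSup_mem hne hB
  have hnL : n ≤ L := le_csSup hB (self_mem_Sset hw hw0)
  have hncast : ((n : ℕ) : ℝ) ≠ 0 := by
    simp only [ne_eq, Nat.cast_eq_zero]
    omega
  rw [index_eq_of_bdd hw hw0 hB] at heq
  have hmul : (n : ℝ) * (((L : ℕ) : ℝ) / (n : ℝ)) = (L : ℝ) := by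
    field_simp
  rw [← hLdef] at heq
  rw [hmul] at heq
  have hrec : recFun u n = L + 1 := by exact_mod_cast heq
  have hRSbdd : BddAbove (RS u n) := by
    by_contra hnb
    have : recFun u n = 0 := by
      rw [recFun_eq, csSup_of_not_bddAbove hnb, csSup_empty]
      rfl
    omega
  set g := L + 2 - n with hgdef
  have hg1 : 1 ≤ g := by omega
  have hgap : ∀ (x : List A), IsFactor u x → x.length = n →
      ∀ a b, FactorAt u x a → FactorAt u x b → a < b →
      (∀ t, a < t → t < b → ¬ FactorAt u x t) → b - a ≤ g := by
    intro x hf hlen a b ha hb hab hcons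
    have hne' : x ≠ [] := by
      intro hnil
      rw [hnil] at hlen
      simp at hlen
      omega
    have hmem := mem_RS hne' hab ha hb hcons
    rw [hlen] at hmem
    have h1 : b - a + n - 1 ≤ recFun u n := by
      rw [recFun_eq]
      exact le_csSup hRSbdd hmem
    omega
  set F := {x : List A | IsFactor u x ∧ x.length = n} with hFdef
  set o : List A → ℕ := fun x => if h : IsFactor u x then h.choose else 0 with hodef
  have ho_spec : ∀ x, IsFactor u x → FactorAt u x (o x) := by
    intro x hx
    rw [hodef]
    simp only [dif_pos hx]
    exact hx.choose_spec
  -- Step A: finiteness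
  have hFin : F.Finite := by
    by_contra hinf
    obtain ⟨T, hTsub, hTcard⟩ := Set.Infinite.exists_subset_card_eq hinf (g + 1)
    set k := T.sup o with hkdef
    have hsub : T ⊆ Finset.image (fun jj => win u jj n) (Finset.Ico k (k + g)) := by
      intro x hxT
      have hxF : x ∈ F := hTsub hxT
      obtain ⟨jx, h1, h2, h3⟩ := occ_in_window hur hxF.1 hg1 (hgap x hxF.1 hxF.2)
        (ho_spec x hxF.1) (Finset.le_sup hxT)
      rw [Finset.mem_image]
      exact ⟨jx, Finset.mem_Ico.mpr ⟨h1, h2⟩, ((factorAt_iff_win hxF.2).mp h3).symm⟩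
    have hc1 := Finset.card_le_card hsub
    have hc2 := Finset.card_image_le (s := Finset.Ico k (k + g)) (f := fun jj => win u jj n)
    rw [Nat.card_Ico] at hc2
    omega
  -- Step B: a single window containing every factor of length n
  set K := hFin.toFinset.sup o with hKdef
  obtain ⟨z, hzf, hzp, hzlen⟩ := hLmem
  obtain ⟨i, hKi, hzocc⟩ := exists_occ_ge hur hzf K
  have hpat : ∀ t, t < L → u (i + t) = u (i + t % n) := by
    intro t ht
    have := pattern_eq hzp hzocc (t := t) (by rw [hzlen]; exact ht)
    exact this
  set c : ℕ → List A := fun r => (List.range n).map fun t => u (i + (r + t) % n) with hcdef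
  set d : List A := win u (i + (L + 1 - n)) n with hddef
  have hsub : F ⊆ (c '' Set.Iio n) ∪ {d} := by
    intro x hxF
    have hoK : o x ≤ K := by
      rw [hKdef]
      exact Finset.le_sup (hFin.mem_toFinset.mpr hxF)
    obtain ⟨j, hij, hjlt, hFj⟩ := occ_in_window hur hxF.1 hg1 (hgap x hxF.1 hxF.2)
      (ho_spec x hxF.1) (le_trans hoK hKi)
    have hxw : x = win u j n := (factorAt_iff_win hxF.2).mp hFj
    have hrle : j - i ≤ L + 1 - n := by omega
    by_cases hcase : (j - i) + n ≤ L
    · left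
      refine ⟨(j - i) % n, Nat.mod_lt _ hn0, ?_⟩
      rw [hxw]
      apply List.ext_getElem (by simp [hcdef])
      intro t h1 h2
      have ht : t < n := by
        have := win_length u j n
        omega
      have e1 : (c ((j - i) % n))[t] = u (i + ((j - i) % n + t) % n) := by
        simp [hcdef]
      have e2 : (win u j n)[t] = u (j + t) := win_getElem u j n t h2
      rw [e1, e2]
      have e3 : ((j - i) % n + t) % n = ((j - i) + t) % n := Nat.mod_add_mod _ _ _
      have e4 : u (i + ((j - i) + t)) = u (i + ((j - i) + t) % n) :=
        hpat ((j - i) + t) (by omega)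
      rw [e3, ← e4]
      exact congrArg u (by omega)
    · right
      have hreq : j - i = L + 1 - n := by omega
      simp only [Set.mem_singleton_iff]
      rw [hxw, hddef]
      congr 1
      omega
  constructor
  · exact hFin
  · have h1 : (c '' Set.Iio n).Finite := (Set.finite_Iio n).image c
    have h2 : ((c '' Set.Iio n) ∪ {d}).Finite := h1.union (Set.finite_singleton d)
    calc Set.ncard F ≤ Set.ncard ((c '' Set.Iio n) ∪ {d}) := Set.ncard_le_ncard hsub h2
      _ ≤ Set.ncard (c '' Set.Iio n) + Set.ncard ({d} : Set (List A)) :=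
          Set.ncard_union_le _ _
      _ ≤ Set.ncard (Set.Iio n) + 1 := by
          have := Set.ncard_image_le (f := c) (s := Set.Iio n) (Set.finite_Iio n)
          have hd1 : Set.ncard ({d} : Set (List A)) = 1 := Set.ncard_singleton d
          omega
      _ = n + 1 := by
          rw [← Finset.coe_range, Set.ncard_coe_finset, Finset.card_range]

private lemma Fset_zero (u : ℕ → A) :
    {x : List A | IsFactor u x ∧ x.length = 0} = {([] : List A)} := by
  ext x
  simp only [Set.mem_setOf_eq, Set.mem_singleton_iff]
  constructor
  · rintro ⟨-, h⟩
    exact List.length_eq_zero_iff.mp h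
  · rintro rfl
    exact ⟨⟨0, rfl⟩, rfl⟩

private lemma take_subset_image {u : ℕ → A} {m M : ℕ} (h : m ≤ M) :
    {x : List A | IsFactor u x ∧ x.length = m} ⊆
      (List.take m) '' {x : List A | IsFactor u x ∧ x.length = M} := by
  rintro x ⟨⟨i, hFa⟩, hlen⟩
  refine ⟨win u i M, ⟨⟨i, factorAt_win u i M⟩, win_length u i M⟩, ?_⟩
  rw [win_take u i h]
  exact ((factorAt_iff_win hlen).mp hFa).symm

private lemma image_take_subset {u : ℕ → A} {m M : ℕ} (h : m ≤ M) :
    (List.take m) '' {x : List A | IsFactor u x ∧ x.length = M} ⊆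
      {x : List A | IsFactor u x ∧ x.length = m} := by
  rintro y ⟨x, ⟨⟨i, hFa⟩, hlen⟩, rfl⟩
  have hx : x = win u i M := (factorAt_iff_win hlen).mp hFa
  rw [hx, win_take u i h]
  exact ⟨⟨i, factorAt_win u i m⟩, win_length u i m⟩

private lemma eventuallyPeriodic_of_le {u : ℕ → A} {m : ℕ}
    (hfin : {x : List A | IsFactor u x ∧ x.length = m + 1}.Finite)
    (hle : complexity u (m + 1) ≤ complexity u m) :
    EventuallyPeriodic u := by
  classical
  set FM := {x : List A | IsFactor u x ∧ x.length = m + 1} with hFM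
  set Fm := {x : List A | IsFactor u x ∧ x.length = m} with hFm
  have himg : List.take m '' FM = Fm :=
    Set.Subset.antisymm (image_take_subset (Nat.le_succ m)) (take_subset_image (Nat.le_succ m))
  have hcompM : complexity u (m + 1) = FM.ncard := rfl
  have hcompm : complexity u m = Fm.ncard := rfl
  have hFmfin : Fm.Finite := by
    rw [← himg]
    exact hfin.image _
  have hcard : (hfin.toFinset.image (List.take m)).card = hfin.toFinset.card := by
    apply le_antisymm Finset.card_image_le
    have h1 : ((hfin.toFinset.image (List.take m)) : Set (List A)) = Fm := by
      rw [Finset.coe_image, Set.Finite.coe_toFinset]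
      exact himg
    have h2 : (hfin.toFinset.image (List.take m)).card = Fm.ncard := by
      rw [← Set.ncard_coe_finset, h1]
    have h3 : hfin.toFinset.card = FM.ncard := by
      rw [← Set.ncard_coe_finset, Set.Finite.coe_toFinset]
    omega
  have hinj : Set.InjOn (List.take m) FM := by
    have := Finset.card_image_iff.mp hcard
    rwa [Set.Finite.coe_toFinset] at this
  have det : ∀ i j : ℕ, win u i m = win u j m → u (i + m) = u (j + m) := by
    intro i j hwin
    have h1 : win u i (m + 1) ∈ FM := ⟨⟨i, factorAt_win u i (m + 1)⟩, win_length u i (m + 1)⟩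
    have h2 : win u j (m + 1) ∈ FM := ⟨⟨j, factorAt_win u j (m + 1)⟩, win_length u j (m + 1)⟩
    have h3 : (win u i (m + 1)).take m = (win u j (m + 1)).take m := by
      rw [win_take u i (Nat.le_succ m), win_take u j (Nat.le_succ m)]
      exact hwin
    have h4 := hinj h1 h2 h3
    exact win_inj_apply h4 (Nat.lt_succ_self m)
  rcases Nat.eq_zero_or_pos m with hm0 | hm0
  · subst hm0
    refine ⟨1, one_pos, 0, fun k _ => ?_⟩
    simpa using det (k + 1) k rfl
  · have hpig : ∃ a b : ℕ, a ≠ b ∧ win u a m = win u b m := by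
      set f : ℕ → hFmfin.toFinset := fun k =>
        ⟨win u k m, hFmfin.mem_toFinset.mpr ⟨⟨k, factorAt_win u k m⟩, win_length u k m⟩⟩ with hf
      obtain ⟨a, b, hab, hfeq⟩ := Finite.exists_ne_map_eq_of_infinite f
      refine ⟨a, b, hab, ?_⟩
      have := congrArg Subtype.val hfeq
      simpa [hf] using this
    obtain ⟨i, j, hij, hw⟩ : ∃ i j, i < j ∧ win u i m = win u j m := by
      obtain ⟨a, b, hab, hwin⟩ := hpig
      rcases lt_or_gt_of_ne hab with hlt | hgt
      · exact ⟨a, b, hlt, hwin⟩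
      · exact ⟨b, a, hgt, hwin.symm⟩
    have Q : ∀ t, win u (i + t) m = win u (j + t) m := by
      intro t
      induction t with
      | zero => simpa using hw
      | succ t ihQ =>
        apply List.ext_getElem (by simp)
        intro s h1 h2
        have hs : s < m := by
          have := win_length u (i + (t + 1)) m
          omega
        rw [win_getElem u (i + (t + 1)) m s h1, win_getElem u (j + (t + 1)) m s h2]
        by_cases hsm : s + 1 < m
        · have h5 := win_inj_apply ihQ (t := s + 1) hsm
          exact (congrArg u (by omega)).trans (h5.trans (congrArg u (by omega)))
        · have hsm' : s + 1 = m := by omega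
          have h5 := det (i + t) (j + t) ihQ
          exact (congrArg u (by omega)).trans (h5.trans (congrArg u (by omega)))
    refine ⟨j - i, by omega, i, fun k hk => ?_⟩
    have h5 := win_inj_apply (Q (k - i)) (t := 0) hm0
    calc u (k + (j - i)) = u (j + (k - i) + 0) := congrArg u (by omega)
      _ = u (i + (k - i) + 0) := h5.symm
      _ = u k := congrArg u (by omega)

/-- if `R(|w|) = |w|·ind(w) + 1` for infinitely many factors `w`
of an aperiodic uniformly recurrent word `u`, then `u` is Sturmian. -/
theorem sturmian_of_recFun_eq {A : Type*} [DecidableEq A]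
    (u : ℕ → A) (hap : ¬ EventuallyPeriodic u) (hur : UniformlyRecurrent u)
    (h : {w : List A | IsFactor u w ∧ w ≠ [] ∧
      (recFun u w.length : ℝ) = (w.length : ℝ) * index u w + 1}.Infinite) :
    IsSturmian u := by
  classical
  intro n₀
  set G := {w : List A | IsFactor u w ∧ w ≠ [] ∧
      (recFun u w.length : ℝ) = (w.length : ℝ) * index u w + 1} with hG
  have hgood : ∀ w ∈ G, {x : List A | IsFactor u x ∧ x.length = w.length}.Finite ∧
      Set.ncard {x : List A | IsFactor u x ∧ x.length = w.length} ≤ w.length + 1 :=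
    fun w hw => good_count hap hur hw.1 hw.2.1 hw.2.2
  -- lengths of good factors are unbounded
  have hub : ∃ w ∈ G, n₀ < w.length := by
    by_contra hno
    push_neg at hno
    apply h
    have hsub : G ⊆ ⋃ ℓ ∈ Set.Iic n₀, {x ∈ G | x.length = ℓ} := by
      intro w hw
      exact Set.mem_biUnion (hno w hw) ⟨hw, rfl⟩
    apply Set.Finite.subset _ hsub
    apply Set.Finite.biUnion (Set.finite_Iic n₀)
    intro ℓ _
    by_cases hne : ∃ w₀ ∈ G, w₀.length = ℓ
    · obtain ⟨w₀, hw₀, rfl⟩ := hne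
      exact ((hgood w₀ hw₀).1).subset (fun x hx => ⟨hx.1.1, hx.2⟩)
    · push_neg at hne
      have : {x ∈ G | x.length = ℓ} = ∅ := by
        ext x
        simp only [Set.mem_setOf_eq, Set.mem_empty_iff_false, iff_false, not_and]
        intro hxG
        exact hne x hxG
      rw [this]
      exact Set.finite_empty
  obtain ⟨w, hwG, hlen⟩ := hub
  obtain ⟨hFinN, hcardN⟩ := hgood w hwG
  set N := w.length with hN
  have hcardN' : complexity u N ≤ N + 1 := hcardN
  -- finiteness downwards
  have hFinm : ∀ m, m ≤ N → {x : List A | IsFactor u x ∧ x.length = m}.Finite := by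
    intro m hm
    exact Set.Finite.subset (hFinN.image (List.take m)) (take_subset_image hm)
  -- strict growth of complexity (Morse–Hedlund, using aperiodicity)
  have hstrict : ∀ m, m < N → complexity u m < complexity u (m + 1) := by
    intro m hm
    by_contra hle
    push_neg at hle
    -- complexity m ≤ complexity (m+1) always (by surjectivity of take)
    have hle2 : complexity u m ≤ complexity u (m + 1) := by
      have h1 : {x : List A | IsFactor u x ∧ x.length = m} ⊆
          (List.take m) '' {x : List A | IsFactor u x ∧ x.length = m + 1} :=
        take_subset_image (Nat.le_succ m)
      have h2 : ((List.take m) ''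
          {x : List A | IsFactor u x ∧ x.length = m + 1}).Finite :=
        (hFinm (m + 1) (by omega)).image _
      calc complexity u m
          ≤ Set.ncard ((List.take m) '' {x : List A | IsFactor u x ∧ x.length = m + 1}) :=
            Set.ncard_le_ncard h1 h2
        _ ≤ complexity u (m + 1) :=
            Set.ncard_image_le (hFinm (m + 1) (by omega))
    have heq2 : complexity u (m + 1) ≤ complexity u m := by omega
    exact hap (eventuallyPeriodic_of_le (hFinm (m + 1) (by omega)) heq2)
  have h0 : complexity u 0 = 1 := by
    show Set.ncard _ = 1
    rw [Fset_zero]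
    exact Set.ncard_singleton _
  have hlow : ∀ m, m ≤ N → m + 1 ≤ complexity u m := by
    intro m
    induction m with
    | zero => intro _; omega
    | succ t ih =>
      intro hm
      have h1 := hstrict t (by omega)
      have h2 := ih (by omega)
      omega
  have hstep : ∀ k m, m + k ≤ N → complexity u m + k ≤ complexity u (m + k) := by
    intro k
    induction k with
    | zero => intro m _; simp
    | succ t ih =>
      intro m hm
      have h1 := ih m (by omega)
      have h2 := hstrict (m + t) (by omega)
      have h3 : m + (t + 1) = (m + t) + 1 := by omega
      rw [h3]
      omega
  have hNval : complexity u N = N + 1 := le_antisymm hcardN' (hlow N le_rfl)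
  have hfin2 : complexity u n₀ + (N - n₀) ≤ complexity u N := by
    have := hstep (N - n₀) n₀ (by omega)
    rwa [show n₀ + (N - n₀) = N from by omega] at this
  have hlow2 := hlow n₀ (by omega)
  omega

end SturmianPaper
end

section
/- Let u be a Sturmian word with slope β = [0,1,b₂,b₃,…], let w be a factor of u and r ∈ ℚ, r ≥ 2 with v = w^r a factor of u. Let φ: A ↦ A^c B, B ↦ A. Then v' = φ(v)A^c is a rational power of w' = φ(w) (with exponent |v'|/|w'| ≥ 2) and v' is a factor of the Sturmian word φ(u), which has slope [0,1,c,b₂,b₃,…]. -/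
open Filter Topology

namespace SturmianPaper

variable {A : Type*} [DecidableEq A]

/-! ### Auxiliary list-combinatorics layer -/

/-- powers of a word -/
def powL (w : List Bool) (K : ℕ) : List Bool := (List.replicate K w).flatten

lemma powL_succ (w : List Bool) (K : ℕ) : powL w (K+1) = w ++ powL w K := by
  unfold powL
  rw [List.replicate_succ, List.flatten_cons]

lemma powL_length (w : List Bool) (K : ℕ) : (powL w K).length = K * w.length := by
  induction K with
  | zero => simp [powL]
  | succ k ih => rw [powL_succ]; simp only [List.length_append, ih]; ring

lemma powL_add (w : List Bool) (m n : ℕ) : powL w (m+n) = powL w m ++ powL w n := by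
  induction m with
  | zero => simp [powL]
  | succ k ih =>
    rw [show k+1+n = (k+n)+1 by omega, powL_succ, ih, powL_succ, List.append_assoc]

lemma powL_getElem? (w : List Bool) (K i : ℕ) (h : i < K * w.length) :
    (powL w K)[i]? = w[i % w.length]? := by
  induction K generalizing i with
  | zero => omega
  | succ k ih =>
    have hs : (k+1) * w.length = k * w.length + w.length := Nat.succ_mul k w.length
    rw [powL_succ, List.getElem?_append]
    by_cases hi : i < w.length
    · simp [hi, Nat.mod_eq_of_lt hi]
    · push_neg at hi
      rw [hs] at h
      rw [if_neg (by omega)]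
      rw [ih (i - w.length) (by omega)]
      rw [show i % w.length = (i - w.length) % w.length from Nat.mod_eq_sub_mod (by omega)]

def phiB (c : ℕ) (b : Bool) : List Bool := if b then List.replicate c true ++ [false] else [true]

lemma phiW_eq_flatten (c : ℕ) (w : List Bool) : phiW c w = (w.map (phiB c)).flatten := rfl

lemma phiW_append (c : ℕ) (x y : List Bool) : phiW c (x ++ y) = phiW c x ++ phiW c y := by
  simp [phiW]

lemma phiW_cons (c : ℕ) (a : Bool) (x : List Bool) :
    phiW c (a :: x) = phiB c a ++ phiW c x := by
  rw [phiW_eq_flatten, List.map_cons, List.flatten_cons]; rfl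

lemma phiW_singleton (c : ℕ) (a : Bool) : phiW c [a] = phiB c a := by
  rw [phiW_cons]
  have : phiW c [] = [] := rfl
  rw [this, List.append_nil]

lemma phiB_length (c : ℕ) (a : Bool) : (phiB c a).length = if a then c + 1 else 1 := by
  cases a <;> simp [phiB]

lemma phiW_length_ge (c : ℕ) (x : List Bool) : x.length ≤ (phiW c x).length := by
  induction x with
  | nil => simp [phiW]
  | cons a t ih =>
    rw [phiW_cons, List.length_append, phiB_length]
    cases a <;> simp <;> omega

lemma phiW_ne_nil {c : ℕ} {x : List Bool} (h : x ≠ []) : phiW c x ≠ [] := by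
  have h1 : 0 < x.length := List.length_pos_iff.2 h
  have h2 := phiW_length_ge c x
  exact List.ne_nil_of_length_pos (by omega)

lemma phiW_powL (c : ℕ) (w : List Bool) (K : ℕ) :
    phiW c (powL w K) = powL (phiW c w) K := by
  induction K with
  | zero => simp [powL, phiW]
  | succ k ih => rw [powL_succ, phiW_append, ih, powL_succ]

lemma fracPow_prefix {w v : List Bool} (h : FracPow w v) : v <+: powL w v.length := by
  obtain ⟨hne, hlen, hidx⟩ := h
  have hw : 0 < w.length := List.length_pos_iff.2 hne
  have : v = (powL w v.length).take v.length := by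
    apply List.ext_getElem?
    intro i
    rw [List.getElem?_take]
    by_cases hi : i < v.length
    · rw [if_pos hi, hidx i hi, powL_getElem? w v.length i (by nlinarith)]
    · rw [if_neg hi, List.getElem?_eq_none (by omega)]
  have htp := List.take_prefix v.length (powL w v.length)
  rwa [← this] at htp

lemma prefix_powL_of_fracPow {w v : List Bool} (h : FracPow w v) {n : ℕ}
    (hn : n * w.length ≤ v.length) : powL w n <+: v := by
  obtain ⟨hne, hlen, hidx⟩ := h
  have : powL w n = v.take (n * w.length) := by
    apply List.ext_getElem?
    intro i
    rw [List.getElem?_take]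
    by_cases hi : i < n * w.length
    · rw [if_pos hi, powL_getElem? w n i hi, hidx i (by omega)]
    · rw [if_neg hi, List.getElem?_eq_none (by rw [powL_length]; omega)]
  rw [this]; exact List.take_prefix _ _

lemma fracPow_of_prefix {w v : List Bool} {K : ℕ} (hne : w ≠ [])
    (hlen : w.length ≤ v.length) (hK : v.length ≤ K * w.length)
    (hpre : v <+: powL w K) : FracPow w v := by
  refine ⟨hne, hlen, fun i hi => ?_⟩
  obtain ⟨t, ht⟩ := hpre
  rw [← powL_getElem? w K i (by omega), ← ht, List.getElem?_append, if_pos hi]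

lemma w_prefix_of_fracPow {w v : List Bool} (h : FracPow w v) : w <+: v := by
  have h1 : powL w 1 = w := by simp [powL]
  have := prefix_powL_of_fracPow h (n := 1) (by simpa using h.2.1)
  rwa [h1] at this

/-! ### Parts 1 and 2: fractional power structure of the image -/

lemma rep_prefix_phiW_pair (c : ℕ) {a a' : Bool} (h : a = true ∨ a' = true) :
    List.replicate c true <+: phiW c [a, a'] := by
  have h2 : phiW c [a, a'] = phiB c a ++ phiB c a' := by
    rw [show ([a, a'] : List Bool) = [a] ++ [a'] by rfl, phiW_append,
      phiW_singleton, phiW_singleton]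
  cases a with
  | true =>
    rw [h2]
    show List.replicate c true <+: (List.replicate c true ++ [false]) ++ phiB c a'
    rw [List.append_assoc]
    exact List.prefix_append _ _
  | false =>
    have ha' : a' = true := by tauto
    subst ha'
    rw [h2]
    show List.replicate c true <+: [true] ++ (List.replicate c true ++ [false])
    have hrw : ([true] ++ (List.replicate c true ++ [false]) : List Bool)
        = List.replicate (c+1) true ++ [false] := by
      rw [List.replicate_succ]; simp
    rw [hrw, List.replicate_succ', List.append_assoc]
    exact List.prefix_append _ _

lemma part2 (c : ℕ) {w v : List Bool} (hfp : FracPow w v) (h2 : 2 * w.length ≤ v.length) :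
    2 * (phiW c w).length ≤ (phiW c v).length := by
  have hpre := prefix_powL_of_fracPow hfp (n := 2) (by omega)
  obtain ⟨t, ht⟩ := hpre
  have hsplit : phiW c v = phiW c (powL w 2) ++ phiW c t := by rw [← ht, phiW_append]
  rw [hsplit, phiW_powL, List.length_append, powL_length]
  omega

lemma part1 (c : ℕ) {w v : List Bool} (hfp : FracPow w v) (h2 : 2 * w.length ≤ v.length)
    (hnBB : ∀ i, i + 1 < v.length → ¬(v[i]? = some false ∧ v[i+1]? = some false)) :
    FracPow (phiW c w) (phiW c v ++ List.replicate c true) := by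
  obtain ⟨hne, hlen, hidx⟩ := hfp
  have hfp' : FracPow w v := ⟨hne, hlen, hidx⟩
  have hw : 0 < w.length := List.length_pos_iff.2 hne
  have hv0 : 0 < v.length := by omega
  have hwv : w.length < v.length := by omega
  set K := v.length + 2 with hKdef
  set L := powL w K with hLdef
  have hLlen : L.length = K * w.length := powL_length w K
  have hKw : v.length + 2 ≤ K * w.length := by nlinarith
  have hvpre : v <+: L := by
    have h1 : v <+: powL w v.length := fracPow_prefix hfp'
    have h2' : powL w K = powL w v.length ++ powL w 2 := powL_add w v.length 2
    rw [hLdef, h2']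
    exact h1.trans (List.prefix_append _ _)
  have ha1 : v.length < L.length := by omega
  have ha2 : v.length + 1 < L.length := by omega
  set a : Bool := L[v.length]'ha1 with hadef
  set a' : Bool := L[v.length + 1]'ha2 with ha'def
  have hLa : L[v.length]? = some a := List.getElem?_eq_getElem ha1
  have hLa' : L[v.length + 1]? = some a' := List.getElem?_eq_getElem ha2
  -- identify a, a' with entries of w / v
  set j := v.length % w.length with hjdef
  have hj : j < w.length := Nat.mod_lt _ hw
  have hwa : w[j]? = some a := by rw [← hLa, hLdef, powL_getElem? w K v.length (by omega)]
  have hpair : a = true ∨ a' = true := by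
    by_contra hcon
    push_neg at hcon
    obtain ⟨hA0, hA0'⟩ := hcon
    have hA : a = false := by revert hA0; cases a <;> simp
    have hA' : a' = false := by revert hA0'; cases a' <;> simp
    have hmod0 : (v.length + 1) % w.length = (j + 1) % w.length := by
      conv_lhs => rw [← Nat.div_add_mod v.length w.length, ← hjdef]
      rw [Nat.add_assoc, Nat.mul_add_mod]
    by_cases hcase : j + 1 < w.length
    · have hmod : (v.length + 1) % w.length = j + 1 := by
        rw [hmod0, Nat.mod_eq_of_lt hcase]
      have hwa' : w[j+1]? = some a' := by
        rw [← hLa', hLdef, powL_getElem? w K (v.length+1) (by omega), hmod]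
      have hv1 : v[j]? = some false := by
        rw [hidx j (by omega), Nat.mod_eq_of_lt hj, hwa, hA]
      have hv2 : v[j+1]? = some false := by
        rw [hidx (j+1) (by omega), Nat.mod_eq_of_lt hcase, hwa', hA']
      exact hnBB j (by omega) ⟨hv1, hv2⟩
    · have hjeq : j + 1 = w.length := by omega
      have hmod : (v.length + 1) % w.length = 0 := by
        rw [hmod0, hjeq, Nat.mod_self]
      have hwa' : w[0]? = some a' := by
        rw [← hLa', hLdef, powL_getElem? w K (v.length+1) (by omega), hmod]
      have hv1 : v[w.length - 1]? = some false := by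
        rw [hidx (w.length - 1) (by omega), Nat.mod_eq_of_lt (by omega),
          show w.length - 1 = j by omega, hwa, hA]
      have hv2 : v[w.length]? = some false := by
        rw [hidx w.length (by omega), Nat.mod_self, hwa', hA']
      have := hnBB (w.length - 1) (by omega)
      rw [show w.length - 1 + 1 = w.length by omega] at this
      exact this ⟨hv1, hv2⟩
  -- decomposition of L
  have hCtake : L.take (v.length + 2) = v ++ [a, a'] := by
    have ht0 : L.take v.length = v := by
      have := List.prefix_iff_eq_take.1 hvpre
      exact this.symm
    rw [show v.length + 2 = (v.length + 1) + 1 by omega, List.take_succ, List.take_succ, ht0,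
      hLa, hLa']
    simp
  have hLsplit : L = (v ++ [a, a']) ++ L.drop (v.length + 2) := by
    conv_lhs => rw [← List.take_append_drop (v.length + 2) L]
    rw [hCtake]
  obtain ⟨t2, ht2⟩ := rep_prefix_phiW_pair c hpair
  have hrep_len : c ≤ (phiW c [a, a']).length := by
    have := (rep_prefix_phiW_pair c hpair).length_le
    simpa using this
  have hphiL : phiW c L = phiW c v ++ (phiW c [a, a'] ++ phiW c (L.drop (v.length + 2))) := by
    conv_lhs => rw [hLsplit]
    rw [phiW_append, phiW_append, List.append_assoc]
  have hphiLlen : (phiW c L).length = K * (phiW c w).length := by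
    rw [hLdef, phiW_powL, powL_length]
  -- prefix of the big power
  have hwpre : w <+: v := w_prefix_of_fracPow hfp'
  obtain ⟨tw, htw⟩ := hwpre
  have hlen' : (phiW c w).length ≤ (phiW c v).length + c := by
    have : phiW c v = phiW c w ++ phiW c tw := by rw [← htw, phiW_append]
    rw [this]
    simp only [List.length_append]
    omega
  have hK' : (phiW c v).length + c ≤ K * (phiW c w).length := by
    have h1 : (phiW c v).length + (phiW c [a,a']).length ≤ (phiW c L).length := by
      rw [hphiL]
      simp only [List.length_append]
      omega
    omega
  have hpre' : phiW c v ++ List.replicate c true <+: powL (phiW c w) K := by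
    rw [← phiW_powL]
    refine ⟨t2 ++ phiW c (L.drop (v.length + 2)), ?_⟩
    rw [hphiL, ← ht2]
    simp [List.append_assoc]
  have := fracPow_of_prefix (phiW_ne_nil hne)
    (by simpa using hlen' : (phiW c w).length ≤ (phiW c v ++ List.replicate c true).length)
    (by simpa using hK') hpre'
  exact this

/-! ### The infinite image word and Part 3 -/

lemma range_map_split (f : ℕ → Bool) (a b : ℕ) :
    (List.range (a+b)).map f
      = (List.range a).map f ++ (List.range b).map (fun j => f (a + j)) := by
  rw [List.range_add, List.map_append, List.map_map]
  rfl

lemma phiW_prefix_mono (c : ℕ) (u : ℕ → Bool) {N M : ℕ} (h : N ≤ M) :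
    phiW c ((List.range N).map u) <+: phiW c ((List.range M).map u) := by
  have hM : M = N + (M - N) := by omega
  rw [hM, range_map_split, phiW_append]
  exact List.prefix_append _ _

lemma getD_prefix {l₁ l₂ : List Bool} (h : l₁ <+: l₂) {m : ℕ} (hm : m < l₁.length) (d : Bool) :
    l₂.getD m d = l₁.getD m d := by
  obtain ⟨t, ht⟩ := h
  rw [← ht, List.getD_eq_getElem?_getD, List.getD_eq_getElem?_getD,
    List.getElem?_append, if_pos hm]

lemma phiInf_eq (c : ℕ) (u : ℕ → Bool) {N m : ℕ}
    (hm : m < (phiW c ((List.range N).map u)).length) :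
    phiInf c u m = (phiW c ((List.range N).map u)).getD m false := by
  have h1 : phiW c ((List.range N).map u) <+: phiW c ((List.range (max N (m+1))).map u) :=
    phiW_prefix_mono c u (le_max_left _ _)
  have h2 : phiW c ((List.range (m+1)).map u) <+: phiW c ((List.range (max N (m+1))).map u) :=
    phiW_prefix_mono c u (le_max_right _ _)
  have hm2 : m < (phiW c ((List.range (m+1)).map u)).length := by
    have a1 : ((List.range (m+1)).map u).length = m + 1 := by simp
    have a2 := phiW_length_ge c ((List.range (m+1)).map u)
    omega
  show (phiW c ((List.range (m+1)).map u)).getD m false = _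
  rw [← getD_prefix h2 hm2 false, getD_prefix h1 hm false]

lemma part3 (c : ℕ) {u : ℕ → Bool} (hnBB : ∀ m, ¬(u m = false ∧ u (m+1) = false))
    {v : List Bool} {i : ℕ} (hv : FactorAt u v i) :
    IsFactor (phiInf c u) (phiW c v ++ List.replicate c true) := by
  classical
  set b := u (i + v.length) with hbdef
  set b' := u (i + v.length + 1) with hb'def
  have hpairb : b = true ∨ b' = true := by
    by_contra hcon
    push_neg at hcon
    obtain ⟨h1, h2⟩ := hcon
    apply hnBB (i + v.length)
    constructor
    · rw [← hbdef]; revert h1; cases b <;> simp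
    · rw [← hb'def]; revert h2; cases b' <;> simp
  obtain ⟨t2, ht2⟩ := rep_prefix_phiW_pair c hpairb
  set N := i + (v.length + 2) with hNdef
  have hv2 : (List.range (v.length + 2)).map (fun j => u (i + j)) = v ++ [b, b'] := by
    have hr2 : List.range 2 = [0, 1] := rfl
    rw [range_map_split (fun j => u (i + j)) v.length 2, ← hv, hr2]
    simp only [List.map_cons, List.map_nil]
    rw [hbdef, hb'def]
    norm_num [Nat.add_assoc]
  set X := phiW c ((List.range i).map u) with hXdef
  set V' := phiW c v ++ List.replicate c true with hV'def
  have hsplit : phiW c ((List.range N).map u) = X ++ (V' ++ (t2 ++ [])) := by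
    rw [hNdef, range_map_split u i (v.length + 2)]
    rw [phiW_append, hv2, phiW_append, ← ht2, hV'def]
    simp [List.append_assoc, hXdef]
  have hPlen : X.length + V'.length ≤ (phiW c ((List.range N).map u)).length := by
    rw [hsplit]; simp only [List.length_append]; omega
  refine ⟨X.length, ?_⟩
  show V' = (List.range V'.length).map fun j => phiInf c u (X.length + j)
  apply List.ext_getElem?
  intro k
  by_cases hk : k < V'.length
  · have hRHS : ((List.range V'.length).map fun j => phiInf c u (X.length + j))[k]?
        = some (phiInf c u (X.length + k)) := by
      rw [List.getElem?_map, List.getElem?_range hk]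
      rfl
    rw [hRHS]
    have hb1 : X.length + k < (phiW c ((List.range N).map u)).length := by omega
    rw [phiInf_eq c u hb1]
    have h3 : (phiW c ((List.range N).map u))[X.length + k]? = V'[k]? := by
      rw [hsplit, List.getElem?_append, if_neg (by omega),
        show X.length + k - X.length = k by omega, List.getElem?_append, if_pos hk]
    rw [List.getD_eq_getElem?_getD, h3, List.getElem?_eq_getElem hk]
    rfl
  · rw [List.getElem?_eq_none (by omega), List.getElem?_eq_none (by simpa using hk)]

/-! ### Rotation codings and the renormalization identity -/

/-- left-continuous rotation coding with step `a`: letter `true` iff orbit point in `(0, 1-a]`. -/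
noncomputable def codeW (a y : ℝ) : ℕ → Bool :=
  fun m => decide (0 < Int.fract (y + m * a) ∧ Int.fract (y + m * a) ≤ 1 - a)

lemma sturmian_noBB (β x₀ : ℝ) (hβ : 1/2 < β) (hβ1 : β < 1) (m : ℕ) :
    ¬(sturmianWord β x₀ m = false ∧ sturmianWord β x₀ (m+1) = false) := by
  rintro ⟨h1, h2⟩
  unfold sturmianWord at h1 h2
  rw [decide_eq_false_iff_not, not_lt] at h1 h2
  set z := x₀ + (m:ℝ) * (1 - β) with hz
  have hfz1 : Int.fract z < 1 := Int.fract_lt_one z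
  rw [show x₀ + ((m+1:ℕ):ℝ) * (1-β) = z + (1-β) by rw [hz]; push_cast; ring] at h2
  have key : Int.fract (z + (1-β)) = Int.fract z - β := by
    conv_lhs => rw [← Int.floor_add_fract z, add_assoc, Int.fract_intCast_add]
    rw [show Int.fract z + (1-β) = (Int.fract z - β) + 1 by ring, Int.fract_add_one]
    exact Int.fract_eq_self.2 ⟨by linarith, by linarith⟩
  rw [key] at h2
  linarith

/-- the floor sequence of the rotation orbit -/
noncomputable def Gg (β x₀ : ℝ) (n : ℕ) : ℤ := ⌊x₀ + (n:ℝ) * (1 - β)⌋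

lemma G_step (β x₀ : ℝ) (hβ0 : 0 < β) (hβ1 : β < 1) (n : ℕ) :
    Gg β x₀ (n+1) = Gg β x₀ n + (if sturmianWord β x₀ n = true then 0 else 1) := by
  set z := x₀ + (n:ℝ) * (1 - β) with hz
  have hkey : (⌊z + (1-β)⌋ : ℤ) = ⌊z⌋ + ⌊Int.fract z + (1-β)⌋ := by
    conv_lhs => rw [← Int.floor_add_fract z, add_assoc, Int.floor_intCast_add]
  have hGg : Gg β x₀ (n+1) = ⌊z + (1-β)⌋ := by
    unfold Gg
    rw [show x₀ + ((n+1:ℕ):ℝ) * (1-β) = z + (1-β) by rw [hz]; push_cast; ring]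
  have hf0 : 0 ≤ Int.fract z := Int.fract_nonneg z
  have hf1 : Int.fract z < 1 := Int.fract_lt_one z
  by_cases hu : sturmianWord β x₀ n = true
  · have ht : Int.fract z < β := by
      unfold sturmianWord at hu
      exact of_decide_eq_true hu
    rw [if_pos hu, hGg, hkey, show ⌊Int.fract z + (1-β)⌋ = 0 from
      Int.floor_eq_zero_iff.2 ⟨by linarith, by linarith⟩]
    show Gg β x₀ n + 0 = Gg β x₀ n + 0
    rfl
  · have ht : β ≤ Int.fract z := by
      unfold sturmianWord at hu
      rw [Bool.not_eq_true, decide_eq_false_iff_not, not_lt] at hu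
      exact hu
    rw [if_neg hu, hGg, hkey]
    have h1 : ⌊Int.fract z + (1-β)⌋ = 1 := by
      rw [show Int.fract z + (1-β) = (Int.fract z - β) + 1 by ring,
        Int.floor_add_one, Int.floor_eq_zero_iff.2 ⟨by linarith, by linarith⟩]
      norm_num
    rw [h1]
    rfl

lemma F_step (c : ℕ) (u : ℕ → Bool) (n : ℕ) :
    phiW c ((List.range (n+1)).map u) = phiW c ((List.range n).map u) ++ phiB c (u n) := by
  rw [List.range_succ, List.map_append, phiW_append]
  congr 1
  rw [show ([n].map u) = [u n] from rfl, phiW_singleton]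

lemma F_len (β x₀ : ℝ) (hβ0 : 0 < β) (hβ1 : β < 1) (hx0 : 0 ≤ x₀) (hx1 : x₀ < 1)
    (c : ℕ) (n : ℕ) :
    ((phiW c ((List.range n).map (sturmianWord β x₀))).length : ℤ)
      = (c+1) * n - c * Gg β x₀ n := by
  induction n with
  | zero =>
    have hG0 : Gg β x₀ 0 = 0 := by
      unfold Gg
      rw [show x₀ + ((0:ℕ):ℝ) * (1-β) = x₀ by push_cast; ring]
      exact Int.floor_eq_zero_iff.2 ⟨hx0, hx1⟩
    rw [hG0]
    simp [phiW]
  | succ k ih =>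
    rw [F_step, List.length_append, phiB_length]
    have hG := G_step β x₀ hβ0 hβ1 k
    by_cases hu : sturmianWord β x₀ k = true
    · rw [if_pos hu]
      rw [if_pos hu] at hG
      rw [hG] at *
      push_cast
      push_cast at ih
      linarith
    · rw [if_neg hu]
      rw [if_neg hu] at hG
      rw [hG]
      push_cast
      push_cast at ih
      linarith

lemma C2 (β x₀ : ℝ) (hβ : 1/2 < β) (hβ1 : β < 1) (hx0 : 0 ≤ x₀) (hx1 : x₀ < 1)
    (c : ℕ) (hc : 1 ≤ c) :
    phiInf c (sturmianWord β x₀) = codeW (β/((c:ℝ)*β+1)) ((1-x₀)/((c:ℝ)*β+1)) := by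
  have hβ0 : (0:ℝ) < β := by linarith
  set u := sturmianWord β x₀ with hu
  set lam : ℝ := (c:ℝ)*β+1 with hlam
  have hc1 : (1:ℝ) ≤ (c:ℝ) := by exact_mod_cast hc
  have hlampos : (0:ℝ) < lam := by nlinarith
  have hlam1 : (1:ℝ) < lam := by nlinarith
  have hlam0 : lam ≠ 0 := ne_of_gt hlampos
  set a : ℝ := β/lam with ha
  set y : ℝ := (1-x₀)/lam with hy
  have ha0 : 0 < a := div_pos hβ0 hlampos
  have hca : (c:ℝ) * a + 1/lam = 1 := by
    rw [ha, show (c:ℝ)*(β/lam) + 1/lam = ((c:ℝ)*β+1)/lam by ring, ← hlam, div_self hlam0]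
  have ha1 : a < 1 := by
    rw [ha, div_lt_one hlampos]; nlinarith
  have hba : (1-β)/lam = 1/lam - a := by
    rw [sub_div, ha]
  funext m
  set F : ℕ → ℕ := fun n => (phiW c ((List.range n).map u)).length with hF
  have hFstep : ∀ n, F (n+1) = F n + (phiB c (u n)).length := by
    intro n
    show (phiW c ((List.range (n+1)).map u)).length = _
    rw [F_step, List.length_append]
  have hFub : ∀ k, k ≤ F k := by
    intro k
    show k ≤ (phiW c ((List.range k).map u)).length
    have a1 : ((List.range k).map u).length = k := by simp
    have a2 := phiW_length_ge c ((List.range k).map u)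
    omega
  -- find the block containing m
  set n := Nat.findGreatest (fun k => F k ≤ m) m with hn
  have hP0 : F 0 ≤ m := by
    show (phiW c ((List.range 0).map u)).length ≤ m
    simp [phiW]
  have hn1 : F n ≤ m := Nat.findGreatest_spec (P := fun k => F k ≤ m) (Nat.zero_le m) hP0
  have hn2 : m < F (n+1) := by
    by_cases hcase : n + 1 ≤ m
    · by_contra hcon
      push_neg at hcon
      exact Nat.findGreatest_is_greatest (P := fun k => F k ≤ m) (by omega) hcase hcon
    · have := hFub (n+1); omega
  set j := m - F n with hj
  have hjlt : j < (phiB c (u n)).length := by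
    have := hFstep n; omega
  have hmFj : m = F n + j := by omega
  -- left-hand side: entry j of the n-th block
  have hn2' : m < (phiW c ((List.range (n+1)).map u)).length := hn2
  have hLHS : phiInf c u m = (phiB c (u n)).getD j false := by
    rw [phiInf_eq c u hn2']
    rw [F_step, List.getD_eq_getElem?_getD, List.getElem?_append]
    have hlen_n : (phiW c ((List.range n).map u)).length = F n := rfl
    rw [if_neg (by rw [hlen_n]; omega), hlen_n, show m - F n = j from rfl,
      ← List.getD_eq_getElem?_getD]
  -- key renormalization identity
  set t := Int.fract (x₀ + (n:ℝ)*(1-β)) with htdef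
  have ht0 : 0 ≤ t := Int.fract_nonneg _
  have ht1 : t < 1 := Int.fract_lt_one _
  have hfr : t = x₀ + (n:ℝ)*(1-β) - ((Gg β x₀ n : ℤ):ℝ) := by
    rw [htdef]
    exact (Int.self_sub_floor _).symm
  have hFn : ((F n : ℕ):ℝ) = ((c:ℝ)+1)*(n:ℝ) - (c:ℝ) * ((Gg β x₀ n : ℤ):ℝ) := by
    have hZ := F_len β x₀ hβ0 hβ1 hx0 hx1 c n
    have h2 : (((phiW c ((List.range n).map u)).length : ℤ) : ℝ)
        = (((c+1) * (n:ℤ) - c * Gg β x₀ n : ℤ) : ℝ) := by exact_mod_cast hZ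
    push_cast at h2
    exact_mod_cast h2
  have key : y + ((F n : ℕ):ℝ) * a = ((n:ℝ) - ((Gg β x₀ n : ℤ):ℝ)) + (1 - t)/lam := by
    rw [hy, ha, hFn, hfr, hlam]
    field_simp
    ring
  have hsplitm : y + (m:ℝ)*a = ((1-t)/lam + (j:ℝ)*a) + (((n:ℤ) - Gg β x₀ n : ℤ):ℝ) := by
    have hm' : (m:ℝ) = ((F n : ℕ):ℝ) + (j:ℝ) := by exact_mod_cast hmFj
    rw [hm']
    push_cast
    linear_combination key
  have hfract : Int.fract (y + (m:ℝ)*a) = Int.fract ((1-t)/lam + (j:ℝ)*a) := by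
    rw [hsplitm, Int.fract_add_intCast]
  rw [hLHS]
  show _ = codeW a y m
  unfold codeW
  rw [hfract]
  set s := (1-t)/lam + (j:ℝ)*a with hs
  by_cases hun : u n = true
  · have htβ : t < β := by
      rw [hu] at hun
      unfold sturmianWord at hun
      exact of_decide_eq_true hun
    have hjc : j < c + 1 := by
      have h' := hjlt
      rw [phiB_length, if_pos hun] at h'
      exact h'
    have hphiB : phiB c (u n) = List.replicate c true ++ [false] := by
      rw [hun]; rfl
    by_cases hjc2 : j < c
    · have hLHSv : (phiB c (u n)).getD j false = true := by
        rw [hphiB, List.getD_eq_getElem?_getD, List.getElem?_append,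
          if_pos (by simpa using hjc2), List.getElem?_replicate, if_pos hjc2]
        rfl
      rw [hLHSv]
      have hdl : 0 < (1-t)/lam := div_pos (by linarith) hlampos
      have hja : 0 ≤ (j:ℝ)*a := mul_nonneg (by positivity) ha0.le
      have hs0 : 0 < s := by rw [hs]; linarith
      have hsle : s ≤ 1 - a := by
        rw [hs]
        have h1 : (1-t)/lam ≤ 1/lam := (div_le_div_iff_of_pos_right hlampos).mpr (by linarith)
        have hjcast : (j:ℝ) ≤ (c:ℝ) - 1 := by
          have hj1 : (j:ℝ) + 1 ≤ (c:ℝ) := by exact_mod_cast (by omega : j + 1 ≤ c)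
          linarith
        have h2 : (j:ℝ)*a ≤ ((c:ℝ)-1)*a := mul_le_mul_of_nonneg_right hjcast ha0.le
        linarith [hca]
      have hfs : Int.fract s = s := Int.fract_eq_self.2 ⟨hs0.le, by linarith⟩
      rw [hfs, eq_comm, decide_eq_true_eq]
      exact ⟨hs0, hsle⟩
    · have hjeq : j = c := by omega
      have hLHSv : (phiB c (u n)).getD j false = false := by
        rw [hphiB, hjeq, List.getD_eq_getElem?_getD, List.getElem?_append,
          if_neg (by simp)]
        simp
      rw [hLHSv]
      have hsgt : 1 - a < s := by
        rw [hs, hjeq]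
        have h1 : (1-β)/lam < (1-t)/lam := (div_lt_div_iff_of_pos_right hlampos).mpr (by linarith)
        have h2 : 1 - a = (1-β)/lam + (c:ℝ)*a := by rw [hba]; linarith [hca]
        linarith
      have hsle1 : s ≤ 1 := by
        rw [hs, hjeq]
        have h1 : (1-t)/lam ≤ 1/lam := (div_le_div_iff_of_pos_right hlampos).mpr (by linarith)
        linarith [hca]
      rw [eq_comm, decide_eq_false_iff_not]
      rintro ⟨hp1, hp2⟩
      rcases lt_or_eq_of_le hsle1 with hlt | heq
      · rw [Int.fract_eq_self.2 ⟨by linarith, hlt⟩] at hp2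
        linarith
      · have hz : Int.fract s = 0 := by rw [heq]; exact Int.fract_one
        rw [hz] at hp1
        exact lt_irrefl _ hp1
  · have hunf : u n = false := by revert hun; cases u n <;> simp
    have htβ : β ≤ t := by
      rw [hu] at hunf
      unfold sturmianWord at hunf
      rw [decide_eq_false_iff_not, not_lt] at hunf
      exact hunf
    have hj0 : j = 0 := by
      have h' := hjlt
      rw [phiB_length, if_neg (by simp [hunf])] at h'
      omega
    have hphiB : phiB c (u n) = [true] := by rw [hunf]; rfl
    have hLHSv : (phiB c (u n)).getD j false = true := by rw [hphiB, hj0]; rfl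
    rw [hLHSv]
    have hdl : 0 < (1-t)/lam := div_pos (by linarith) hlampos
    have hs0 : 0 < s := by
      rw [hs, hj0]
      push_cast
      linarith
    have hsle : s ≤ 1 - a := by
      rw [hs, hj0]
      have h1 : (1-t)/lam ≤ (1-β)/lam := (div_le_div_iff_of_pos_right hlampos).mpr (by linarith)
      have h2 : 1/lam < 1 := by rw [div_lt_one hlampos]; exact hlam1
      push_cast
      rw [hba] at h1
      linarith
    have hfs : Int.fract s = s := Int.fract_eq_self.2 ⟨hs0.le, by linarith⟩
    rw [hfs, eq_comm, decide_eq_true_eq]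
    exact ⟨hs0, hsle⟩

/-! ### Morse–Hedlund lower bound -/

lemma factorAt_window (u : ℕ → Bool) (i n : ℕ) :
    FactorAt u ((List.range n).map fun j => u (i + j)) i := by
  unfold FactorAt
  rw [List.length_map, List.length_range]

lemma factors_finite (u : ℕ → Bool) (n : ℕ) :
    {w : List Bool | IsFactor u w ∧ w.length = n}.Finite := by
  apply Set.Finite.subset (Set.finite_range (fun f : Fin n → Bool => List.ofFn f))
  rintro w ⟨-, hlen⟩
  subst hlen
  exact ⟨w.get, List.ofFn_get w⟩

lemma window_eq {u : ℕ → Bool} {w : List Bool} {i : ℕ} (h : FactorAt u w i) :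
    w = (List.range w.length).map fun j => u (i + j) := h

lemma factors_take {u : ℕ → Bool} (n : ℕ) :
    {w : List Bool | IsFactor u w ∧ w.length = n}
      ⊆ (List.take n) '' {w : List Bool | IsFactor u w ∧ w.length = n + 1} := by
  rintro w ⟨⟨i, hi⟩, hlen⟩
  refine ⟨(List.range (n+1)).map fun j => u (i + j),
    ⟨⟨i, factorAt_window u i (n+1)⟩, by simp⟩, ?_⟩
  rw [← List.map_take, List.take_range, show (n ⊓ (n+1)) = n from by omega]
  have hi' := window_eq hi
  rw [hlen] at hi'
  exact hi'.symm

lemma complexity_mono (u : ℕ → Bool) (n : ℕ) : complexity u n ≤ complexity u (n+1) := by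
  unfold complexity
  calc {w : List Bool | IsFactor u w ∧ w.length = n}.ncard
      ≤ ((List.take n) '' {w : List Bool | IsFactor u w ∧ w.length = n + 1}).ncard :=
        Set.ncard_le_ncard (factors_take n) ((factors_finite u (n+1)).image _)
    _ ≤ {w : List Bool | IsFactor u w ∧ w.length = n + 1}.ncard :=
        Set.ncard_image_le (factors_finite u (n+1))

lemma MH_step (u : ℕ → Bool) (n : ℕ) (h : complexity u (n+1) ≤ complexity u n) :
    EventuallyPeriodic u := by
  classical
  set Fset := {w : List Bool | IsFactor u w ∧ w.length = n+1} with hFset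
  set s : ℕ → List Bool := fun i => (List.range n).map fun j => u (i + j) with hs
  set e : ℕ → List Bool := fun i => (List.range (n+1)).map fun j => u (i + j) with he
  have hslen : ∀ i, (s i).length = n := by intro i; rw [hs]; simp
  have hsget : ∀ i j, j < n → (s i)[j]? = some (u (i + j)) := by
    intro i j hj
    rw [hs]
    simp only [List.getElem?_map, List.getElem?_range hj]
    rfl
  have heget : ∀ i j, j < n + 1 → (e i)[j]? = some (u (i + j)) := by
    intro i j hj
    rw [he]
    simp only [List.getElem?_map, List.getElem?_range hj]
    rfl
  have he_mem : ∀ i, e i ∈ Fset := fun i => ⟨⟨i, factorAt_window u i (n+1)⟩, by rw [he]; simp⟩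
  have he_take : ∀ i, (e i).take n = s i := by
    intro i
    rw [he, hs, ← List.map_take, List.take_range, show (n ⊓ (n+1)) = n from by omega]
  have himg : (List.take n) '' Fset = {w : List Bool | IsFactor u w ∧ w.length = n} := by
    apply Set.Subset.antisymm
    · rintro _ ⟨w, ⟨⟨i, hi⟩, hlen⟩, rfl⟩
      have hwe : w = e i := by rw [he, ← hlen]; exact hi
      rw [hwe, he_take]
      exact ⟨⟨i, factorAt_window u i n⟩, hslen i⟩
    · exact factors_take n
  have hcard : ((List.take n) '' Fset).ncard = Fset.ncard := by
    apply le_antisymm (Set.ncard_image_le (factors_finite u (n+1)))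
    calc Fset.ncard = complexity u (n+1) := rfl
      _ ≤ complexity u n := h
      _ = ((List.take n) '' Fset).ncard := by rw [himg]; rfl
  have hinj : Set.InjOn (List.take n) Fset :=
    Set.injOn_of_ncard_image_eq hcard (factors_finite u (n+1))
  have H : ∀ i i', s i = s i' → u (i + n) = u (i' + n) := by
    intro i i' hss
    have hee : e i = e i' := hinj (he_mem i) (he_mem i') (by rw [he_take, he_take, hss])
    have h1 := heget i n (by omega)
    have h2 := heget i' n (by omega)
    rw [hee] at h1
    rw [h1] at h2
    exact Option.some.inj h2
  -- pigeonhole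
  obtain ⟨i0, i0', hne, hf⟩ :=
    Finite.exists_ne_map_eq_of_infinite (fun i : ℕ => fun x : Fin n => u (i + x))
  have hs00 : s i0 = s i0' := by
    apply List.ext_getElem?
    intro j
    by_cases hj : j < n
    · rw [hsget i0 j hj, hsget i0' j hj]
      have := congrFun hf ⟨j, hj⟩
      simp only at this
      rw [this]
    · rw [List.getElem?_eq_none (by rw [hslen]; omega),
        List.getElem?_eq_none (by rw [hslen]; omega)]
  obtain ⟨i, i', hlt, hs0⟩ : ∃ i i', i < i' ∧ s i = s i' := by
    rcases hne.lt_or_gt with hlt | hlt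
    · exact ⟨i0, i0', hlt, hs00⟩
    · exact ⟨i0', i0, hlt, hs00.symm⟩
  have D : ∀ k, s (i + k) = s (i' + k) := by
    intro k
    induction k with
    | zero => simpa using hs0
    | succ l ih =>
      have hE : u (i + l + n) = u (i' + l + n) := H (i+l) (i'+l) ih
      apply List.ext_getElem?
      intro j
      by_cases hj : j < n
      · rw [hsget _ j hj, hsget _ j hj]
        by_cases hj1 : j + 1 < n
        · have h1 := hsget (i+l) (j+1) hj1
          have h2 := hsget (i'+l) (j+1) hj1
          rw [ih] at h1
          rw [h1] at h2
          have := Option.some.inj h2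
          rw [show i + (l+1) + j = i + l + (j+1) by omega,
            show i' + (l+1) + j = i' + l + (j+1) by omega, this]
        · have hjn : j + 1 = n := by omega
          rw [show i + (l+1) + j = i + l + n by omega,
            show i' + (l+1) + j = i' + l + n by omega, hE]
      · rw [List.getElem?_eq_none (by rw [hslen]; omega),
          List.getElem?_eq_none (by rw [hslen]; omega)]
  refine ⟨i' - i, by omega, i + n, fun m hm => ?_⟩
  have hE := H (i + (m - (i+n))) (i' + (m - (i+n))) (D (m - (i+n)))
  calc u (m + (i' - i)) = u (i' + (m - (i+n)) + n) := by
        rw [show m + (i' - i) = i' + (m - (i+n)) + n by omega]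
    _ = u (i + (m - (i+n)) + n) := hE.symm
    _ = u m := by rw [show i + (m - (i+n)) + n = m by omega]

lemma MH (u : ℕ → Bool) (hnp : ¬ EventuallyPeriodic u) : ∀ n, n + 1 ≤ complexity u n := by
  intro n
  induction n with
  | zero =>
    have hmem : ([] : List Bool) ∈ {w : List Bool | IsFactor u w ∧ w.length = 0} :=
      ⟨⟨0, by unfold FactorAt; simp⟩, rfl⟩
    have := (Set.ncard_pos (factors_finite u 0)).2 ⟨[], hmem⟩
    exact this
  | succ k ih =>
    by_contra hcon
    push_neg at hcon
    have hle : complexity u (k+1) ≤ complexity u k := by omega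
    exact hnp (MH_step u k hle)

/-! ### Counting, frequency, and aperiodicity of rotation codings -/

lemma codeW_iff_ceil (a : ℝ) (ha0 : 0 < a) (ha1 : a < 1) (z : ℝ) :
    (0 < Int.fract z ∧ Int.fract z ≤ 1 - a) ↔ ⌈z + a⌉ = ⌈z⌉ := by
  have hfr : Int.fract z = z - ⌊z⌋ := (Int.self_sub_floor z).symm
  have hfl : (⌊z⌋:ℝ) ≤ z := Int.floor_le z
  have hfu : z < ⌊z⌋ + 1 := Int.lt_floor_add_one z
  constructor
  · rintro ⟨h1, h2⟩
    have hzfl : (⌊z⌋:ℝ) < z := by rw [hfr] at h1; linarith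
    have hceil : ⌈z⌉ = ⌊z⌋ + 1 := by
      rw [Int.ceil_eq_iff]
      constructor
      · push_cast; linarith
      · push_cast; linarith
    rw [hceil, Int.ceil_eq_iff]
    constructor
    · push_cast; linarith
    · push_cast; rw [hfr] at h2; linarith
  · intro h
    by_contra hcon
    rw [not_and_or] at hcon
    rcases hcon with h0 | hgt
    · have hf0 : Int.fract z = 0 := le_antisymm (not_lt.1 h0) (Int.fract_nonneg z)
      have hzint : z = (⌊z⌋:ℝ) := by rw [hfr] at hf0; linarith
      rw [hzint, show (⌊z⌋:ℝ) + a = a + (⌊z⌋:ℝ) by ring, Int.ceil_add_intCast,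
        Int.ceil_intCast] at h
      have ha' : ⌈a⌉ = 1 := by
        rw [Int.ceil_eq_iff]
        constructor
        · push_cast; linarith
        · push_cast; linarith
      rw [ha'] at h
      omega
    · push_neg at hgt
      have h2 : (⌊z⌋ + 1 : ℤ) < ⌈z + a⌉ := by
        rw [Int.lt_ceil]
        push_cast
        rw [hfr] at hgt
        linarith
      have h3 : ⌈z⌉ ≤ ⌊z⌋ + 1 := Int.ceil_le_floor_add_one z
      omega

lemma codeW_count (a y : ℝ) (ha0 : 0 < a) (ha1 : a < 1) (n : ℕ) :
    (((List.range n).map (codeW a y)).count true : ℤ)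
      = n - (⌈y + (n:ℝ)*a⌉ - ⌈y⌉) := by
  induction n with
  | zero => simp
  | succ k ih =>
    rw [List.range_succ, List.map_append, List.count_append]
    have hcast : y + ((k+1:ℕ):ℝ)*a = (y + (k:ℝ)*a) + a := by push_cast; ring
    by_cases h : codeW a y k = true
    · have hprop : 0 < Int.fract (y + (k:ℝ)*a) ∧ Int.fract (y + (k:ℝ)*a) ≤ 1 - a := by
        unfold codeW at h
        exact of_decide_eq_true h
      have hceil : ⌈(y + (k:ℝ)*a) + a⌉ = ⌈y + (k:ℝ)*a⌉ :=
        (codeW_iff_ceil a ha0 ha1 (y + (k:ℝ)*a)).1 hprop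
      have h1' : (([k].map (codeW a y)).count true) = 1 := by simp [h]
      rw [h1', hcast, hceil]
      push_cast
      omega
    · have hne : ¬(⌈(y + (k:ℝ)*a) + a⌉ = ⌈y + (k:ℝ)*a⌉) := by
        intro he
        have hp := (codeW_iff_ceil a ha0 ha1 (y + (k:ℝ)*a)).2 he
        apply h
        unfold codeW
        exact decide_eq_true hp
      have hub : ⌈(y + (k:ℝ)*a) + a⌉ ≤ ⌈y + (k:ℝ)*a⌉ + 1 := by
        have h2 : ⌈(y + (k:ℝ)*a) + a⌉ ≤ ⌈(y + (k:ℝ)*a) + 1⌉ := Int.ceil_le_ceil (by linarith)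
        rwa [Int.ceil_add_one] at h2
      have hlb : ⌈y + (k:ℝ)*a⌉ ≤ ⌈(y + (k:ℝ)*a) + a⌉ := Int.ceil_le_ceil (by linarith)
      have hfalse : codeW a y k = false := by revert h; cases (codeW a y k) <;> simp
      have h1' : (([k].map (codeW a y)).count true) = 0 := by simp [hfalse]
      rw [h1', hcast]
      push_cast
      omega

lemma codeW_freq (a y : ℝ) (ha0 : 0 < a) (ha1 : a < 1) :
    Filter.Tendsto (fun n : ℕ => (((List.range n).map (codeW a y)).count true : ℝ) / n)
      Filter.atTop (nhds (1 - a)) := by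
  set C : ℝ := |y| + |((⌈y⌉:ℤ):ℝ)| + 1 with hC
  have hbound : ∀ᶠ n : ℕ in Filter.atTop,
      ‖(((List.range n).map (codeW a y)).count true : ℝ)/n - (1-a)‖ ≤ C / n := by
    filter_upwards [Filter.eventually_ge_atTop 1] with n hn
    have hcnt : (((List.range n).map (codeW a y)).count true : ℝ)
        = n - ((⌈y + (n:ℝ)*a⌉ : ℝ) - (⌈y⌉:ℝ)) := by
      have := codeW_count a y ha0 ha1 n
      push_cast at this ⊢
      exact_mod_cast this
    have hn0 : (0:ℝ) < n := by exact_mod_cast hn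
    rw [hcnt, Real.norm_eq_abs]
    have hexp : ((n:ℝ) - ((⌈y + (n:ℝ)*a⌉:ℝ) - ⌈y⌉))/n - (1-a)
        = ((n:ℝ)*a - ⌈y + (n:ℝ)*a⌉ + ⌈y⌉)/n := by
      field_simp
      ring
    rw [hexp, abs_div, abs_of_pos hn0]
    apply (div_le_div_iff_of_pos_right hn0).mpr
    have h1 : y + (n:ℝ)*a ≤ ⌈y + (n:ℝ)*a⌉ := Int.le_ceil _
    have h2 : (⌈y + (n:ℝ)*a⌉:ℝ) < y + (n:ℝ)*a + 1 := Int.ceil_lt_add_one _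
    have hA1 : -|y| ≤ y := neg_abs_le y
    have hA2 : y ≤ |y| := le_abs_self y
    have hB1 : -|((⌈y⌉:ℤ):ℝ)| ≤ ((⌈y⌉:ℤ):ℝ) := neg_abs_le _
    have hB2 : ((⌈y⌉:ℤ):ℝ) ≤ |((⌈y⌉:ℤ):ℝ)| := le_abs_self _
    rw [abs_le]
    constructor
    · rw [hC]; linarith
    · rw [hC]; linarith
  have h0 : Filter.Tendsto
      (fun n : ℕ => (((List.range n).map (codeW a y)).count true : ℝ)/n - (1-a))
      Filter.atTop (nhds 0) :=
    squeeze_zero_norm' hbound (tendsto_const_div_atTop_nhds_zero_nat C)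
  have h1 := h0.add_const (1-a)
  simpa using h1

lemma codeW_notEvP (a y : ℝ) (hirr : Irrational a) (ha0 : 0 < a) (ha1 : a < 1) :
    ¬ EventuallyPeriodic (codeW a y) := by
  rintro ⟨p, hp, N, hper⟩
  set W := codeW a y with hW
  have hshift : ∀ k m, N ≤ m → W (m + k*p) = W m := by
    intro k
    induction k with
    | zero => intro m hm; simp
    | succ l ih =>
      intro m hm
      have h1 : m + (l+1)*p = (m + l*p) + p := by ring
      rw [h1, hper (m + l*p) (by omega), ih m hm]
  set cnt : ℕ → ℕ := fun n => ((List.range n).map W).count true with hcnt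
  have hwindow : ∀ x s, cnt (x + s) = cnt x + ((List.range s).map (fun r => W (x + r))).count true := by
    intro x s
    show ((List.range (x+s)).map W).count true = _
    rw [range_map_split W x s, List.count_append]
  set d := ((List.range p).map (fun r => W (N + r))).count true with hd
  have hlin : ∀ k, cnt (N + k*p) = cnt N + k*d := by
    intro k
    induction k with
    | zero => simp
    | succ l ih =>
      have h1 : N + (l+1)*p = (N + l*p) + p := by ring
      rw [h1, hwindow (N + l*p) p]
      have hB : ((List.range p).map (fun r => W (N + l*p + r))).count true = d := by
        rw [hd]
        congr 1
        apply List.map_congr_left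
        intro r hr
        rw [show N + l*p + r = (N + r) + l*p by ring, hshift l (N + r) (by omega)]
      rw [hB, ih]
      ring
  have hmono : StrictMono (fun k : ℕ => N + k*p) := by
    intro x z hxz
    show N + x*p < N + z*p
    have : x * p < z * p := (Nat.mul_lt_mul_right hp).2 hxz
    omega
  have h1 : Filter.Tendsto (fun k : ℕ => (cnt (N + k*p) : ℝ)/((N + k*p : ℕ):ℝ))
      Filter.atTop (nhds (1-a)) := by
    have := (codeW_freq a y ha0 ha1).comp hmono.tendsto_atTop
    exact this
  have hp0 : (0:ℝ) < (p:ℝ) := by exact_mod_cast hp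
  have h2 : Filter.Tendsto (fun k : ℕ => (cnt (N + k*p) : ℝ)/((N + k*p : ℕ):ℝ))
      Filter.atTop (nhds ((d:ℝ)/p)) := by
    have hA : Filter.Tendsto (fun k : ℕ => (cnt N : ℝ)/k + d) Filter.atTop (nhds ((d:ℝ))) := by
      have := (tendsto_const_div_atTop_nhds_zero_nat ((cnt N : ℕ):ℝ)).add_const ((d:ℕ):ℝ)
      simpa using this
    have hB : Filter.Tendsto (fun k : ℕ => (N : ℝ)/k + p) Filter.atTop (nhds ((p:ℝ))) := by
      have := (tendsto_const_div_atTop_nhds_zero_nat ((N : ℕ):ℝ)).add_const ((p:ℕ):ℝ)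
      simpa using this
    have hAB := hA.div hB (ne_of_gt hp0)
    apply hAB.congr'
    filter_upwards [Filter.eventually_ge_atTop 1] with k hk
    have hk0 : (k:ℝ) ≠ 0 := by
      have : (0:ℝ) < k := by exact_mod_cast hk
      exact ne_of_gt this
    rw [hlin k, Pi.div_apply]
    push_cast
    have hden : (0:ℝ) < (N:ℝ) + (k:ℝ)*(p:ℝ) := by positivity
    field_simp
  have hlim : (1:ℝ) - a = (d:ℝ)/(p:ℝ) := tendsto_nhds_unique h1 h2
  apply hirr
  refine ⟨1 - (d:ℚ)/(p:ℚ), ?_⟩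
  push_cast
  linarith

/-! ### Complexity upper bound for rotation codings -/

lemma codeW_eq_ceil (a y : ℝ) (ha0 : 0 < a) (ha1 : a < 1) (m : ℕ) :
    codeW a y m = decide (⌈(y + (m:ℝ)*a) + a⌉ = ⌈y + (m:ℝ)*a⌉) := by
  unfold codeW
  exact decide_eq_decide.2 (codeW_iff_ceil a ha0 ha1 (y + (m:ℝ)*a))

lemma codeW_UB (a y : ℝ) (hirr : Irrational a) (ha0 : 0 < a) (ha1 : a < 1) (n : ℕ) :
    complexity (codeW a y) n ≤ n + 1 := by
  classical
  set τ : ℕ → ℝ := fun j => ((⌈(j:ℝ)*a⌉:ℤ):ℝ) - (j:ℝ)*a - 1 with hτ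
  set cnt : ℝ → ℕ := fun δ => ((Finset.Icc 1 n).filter (fun j => τ j < δ)).card with hcnt
  set Fd : ℝ → List Bool := fun δ =>
    (List.range n).map (fun j => decide (⌈((j+1:ℕ):ℝ)*a + δ⌉ = ⌈(j:ℝ)*a + δ⌉)) with hFd
  have key0 : ∀ j : ℕ, 1 ≤ j → ∀ δ : ℝ, -1 < δ → δ ≤ 0 →
      ⌈(j:ℝ)*a + δ⌉ = if τ j < δ then ⌈(j:ℝ)*a⌉ else ⌈(j:ℝ)*a⌉ - 1 := by
    intro j hj δ hδ1 hδ0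
    have hja : Irrational ((j:ℝ)*a) := hirr.natCast_mul (by omega)
    have hne : ((j:ℝ)*a) ≠ ((⌈(j:ℝ)*a⌉:ℤ):ℝ) := hja.ne_int _
    have hlt : (j:ℝ)*a < ((⌈(j:ℝ)*a⌉:ℤ):ℝ) := lt_of_le_of_ne (Int.le_ceil _) hne
    have hgt : ((⌈(j:ℝ)*a⌉:ℤ):ℝ) - 1 < (j:ℝ)*a := by
      have := Int.ceil_lt_add_one ((j:ℝ)*a); linarith
    have hτj : τ j = ((⌈(j:ℝ)*a⌉:ℤ):ℝ) - (j:ℝ)*a - 1 := rfl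
    by_cases hcase : τ j < δ
    · rw [hτj] at hcase
      rw [if_pos (by rw [hτj]; exact hcase), Int.ceil_eq_iff]
      constructor
      · push_cast; linarith
      · push_cast; linarith
    · rw [hτj] at hcase
      push_neg at hcase
      rw [if_neg (by rw [hτj]; push_neg; exact hcase), Int.ceil_eq_iff]
      constructor
      · push_cast; linarith
      · push_cast; linarith
  have hz0 : ∀ δ : ℝ, -1 < δ → δ ≤ 0 → ⌈δ⌉ = 0 := by
    intro δ h1 h2
    rw [Int.ceil_eq_iff]
    constructor
    · push_cast; linarith
    · push_cast; linarith
  have key1 : ∀ δ δ' : ℝ, -1 < δ → δ ≤ 0 → -1 < δ' → δ' ≤ 0 → cnt δ = cnt δ' →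
      Fd δ = Fd δ' := by
    intro δ δ' h1 h2 h1' h2' hcc
    have hiff : ∀ j, 1 ≤ j → j ≤ n → (τ j < δ ↔ τ j < δ') := by
      intro j hj1 hjn
      have hseteq : ((Finset.Icc 1 n).filter (fun j => τ j < δ))
          = ((Finset.Icc 1 n).filter (fun j => τ j < δ')) := by
        rcases le_total δ δ' with hle | hle
        · apply Finset.eq_of_subset_of_card_le
          · exact Finset.monotone_filter_right _ (fun x _ hx => lt_of_lt_of_le hx hle)
          · exact le_of_eq hcc.symm
        · refine (Finset.eq_of_subset_of_card_le ?_ ?_).symm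
          · exact Finset.monotone_filter_right _ (fun x _ hx => lt_of_lt_of_le hx hle)
          · exact le_of_eq hcc
      constructor
      · intro hh
        have hmem : j ∈ (Finset.Icc 1 n).filter (fun j => τ j < δ) :=
          Finset.mem_filter.2 ⟨Finset.mem_Icc.2 ⟨hj1, hjn⟩, hh⟩
        rw [hseteq] at hmem
        exact (Finset.mem_filter.1 hmem).2
      · intro hh
        have hmem : j ∈ (Finset.Icc 1 n).filter (fun j => τ j < δ') :=
          Finset.mem_filter.2 ⟨Finset.mem_Icc.2 ⟨hj1, hjn⟩, hh⟩
        rw [← hseteq] at hmem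
        exact (Finset.mem_filter.1 hmem).2
    simp only [hFd]
    apply List.map_congr_left
    intro j hj
    rw [List.mem_range] at hj
    by_cases hj0 : j = 0
    · subst hj0
      have e0 : ((0:ℕ):ℝ)*a + δ = δ := by push_cast; ring
      have e0' : ((0:ℕ):ℝ)*a + δ' = δ' := by push_cast; ring
      have ecast : ((0+1:ℕ):ℝ) = ((1:ℕ):ℝ) := by norm_num
      rw [e0, e0', hz0 δ h1 h2, hz0 δ' h1' h2', ecast,
        key0 1 le_rfl δ h1 h2, key0 1 le_rfl δ' h1' h2']
      have i1 := hiff 1 le_rfl (by omega)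
      by_cases hA : τ 1 < δ
      · rw [if_pos hA, if_pos (i1.1 hA)]
      · rw [if_neg hA, if_neg (fun hh => hA (i1.2 hh))]
    · have hj1 : 1 ≤ j := by omega
      rw [key0 (j+1) (by omega) δ h1 h2, key0 (j+1) (by omega) δ' h1' h2',
        key0 j hj1 δ h1 h2, key0 j hj1 δ' h1' h2']
      have i1 := hiff (j+1) (by omega) (by omega)
      have i2 := hiff j hj1 (by omega)
      by_cases hA : τ (j+1) < δ
      · rw [if_pos hA, if_pos (i1.1 hA)]
        by_cases hB : τ j < δ
        · rw [if_pos hB, if_pos (i2.1 hB)]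
        · rw [if_neg hB, if_neg (fun hh => hB (i2.2 hh))]
      · rw [if_neg hA, if_neg (fun hh => hA (i1.2 hh))]
        by_cases hB : τ j < δ
        · rw [if_pos hB, if_pos (i2.1 hB)]
        · rw [if_neg hB, if_neg (fun hh => hB (i2.2 hh))]
  set Wd : ℕ → List Bool := fun k =>
    if h : ∃ δ0 : ℝ, (-1 < δ0 ∧ δ0 ≤ 0) ∧ cnt δ0 = k then Fd h.choose else [] with hWd
  have hsubset : {w : List Bool | IsFactor (codeW a y) w ∧ w.length = n}
      ⊆ Wd '' (Set.Iic n) := by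
    rintro w ⟨⟨i, hi⟩, hlen⟩
    set x : ℝ := y + (i:ℝ)*a with hx
    set δ : ℝ := x - ((⌈x⌉:ℤ):ℝ) with hδ
    have hδ1 : -1 < δ := by
      have := Int.ceil_lt_add_one x
      rw [hδ]; linarith
    have hδ0 : δ ≤ 0 := by
      have := Int.le_ceil x
      rw [hδ]; linarith
    have hwFd : w = Fd δ := by
      have hi' := window_eq hi
      rw [hlen] at hi'
      rw [hi']
      simp only [hFd]
      apply List.map_congr_left
      intro j hj
      rw [List.mem_range] at hj
      rw [codeW_eq_ceil a y ha0 ha1 (i + j)]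
      have hsp1 : (y + ((i+j:ℕ):ℝ)*a) + a = (((j+1:ℕ):ℝ)*a + δ) + ((⌈x⌉:ℤ):ℝ) := by
        rw [hδ, hx]; push_cast; ring
      have hsp2 : y + ((i+j:ℕ):ℝ)*a = ((j:ℝ)*a + δ) + ((⌈x⌉:ℤ):ℝ) := by
        rw [hδ, hx]; push_cast; ring
      rw [hsp1, hsp2, Int.ceil_add_intCast, Int.ceil_add_intCast]
      exact decide_eq_decide.2 ⟨fun hh => by omega, fun hh => by omega⟩
    have hcle : cnt δ ≤ n := by
      calc cnt δ ≤ (Finset.Icc 1 n).card := Finset.card_filter_le _ _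
        _ = n := by rw [Nat.card_Icc]; omega
    refine ⟨cnt δ, hcle, ?_⟩
    have hex : ∃ δ0 : ℝ, (-1 < δ0 ∧ δ0 ≤ 0) ∧ cnt δ0 = cnt δ := ⟨δ, ⟨hδ1, hδ0⟩, rfl⟩
    have hWdv : Wd (cnt δ) = Fd hex.choose := by
      simp only [hWd]
      rw [dif_pos hex]
    obtain ⟨⟨hc1, hc2⟩, hc3⟩ := hex.choose_spec
    rw [hWdv, hwFd]
    exact key1 _ _ hc1 hc2 hδ1 hδ0 hc3
  unfold complexity
  calc {w : List Bool | IsFactor (codeW a y) w ∧ w.length = n}.ncard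
      ≤ (Wd '' (Set.Iic n)).ncard :=
        Set.ncard_le_ncard hsubset ((Set.finite_Iic n).image _)
    _ ≤ (Set.Iic n : Set ℕ).ncard := Set.ncard_image_le (Set.finite_Iic n)
    _ = n + 1 := by rw [← Finset.coe_Iic, Set.ncard_coe_finset, Nat.card_Iic]

lemma irr_ap (β : ℝ) (hirr : Irrational β) (hβ0 : 0 < β) (c : ℕ) :
    Irrational (β / ((c:ℝ)*β + 1)) := by
  rintro ⟨q, hq⟩
  have hlam : (0:ℝ) < (c:ℝ)*β+1 := by positivity
  have hβq : (q:ℝ) * ((c:ℝ)*β+1) = β := by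
    rw [hq, div_mul_cancel₀ _ (ne_of_gt hlam)]
  have key2 : β*(1 - (q:ℝ)*(c:ℝ)) = (q:ℝ) := by linear_combination -hβq
  by_cases hqc : (1 - q*(c:ℚ)) = 0
  · have hr : (1:ℝ) - (q:ℝ)*(c:ℝ) = 0 := by exact_mod_cast hqc
    rw [hr, mul_zero] at key2
    rw [← key2] at hr
    norm_num at hr
  · apply hirr
    refine ⟨q / (1 - q*(c:ℚ)), ?_⟩
    have hne : (1:ℝ) - (q:ℝ)*(c:ℝ) ≠ 0 := by
      intro h0
      apply hqc
      exact_mod_cast h0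
    push_cast
    rw [div_eq_iff hne]
    linarith [key2]

lemma codeW_sturmian (a y : ℝ) (hirr : Irrational a) (ha0 : 0 < a) (ha1 : a < 1) :
    IsSturmian (codeW a y) := by
  intro n
  have hub := codeW_UB a y hirr ha0 ha1 n
  have hlb := MH (codeW a y) (codeW_notEvP a y hirr ha0 ha1) n
  omega
/-- key lemma: if `v = w^r`, `r ≥ 2`, is a factor of a Sturmian
word `u` of slope `β = [0,1,b₂,…]`, then `v' = φ(v)Aᶜ` is a rational power of
`w' = φ(w)` with exponent `≥ 2`, and `v'` is a factor of the Sturmian word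
`φ(u)`, whose slope is `(cβ + 1 − β)/(cβ + 1) = [0,1,c,b₂,b₃,…]`. -/
theorem morphism_power_lemma (β x₀ : ℝ) (hirr : Irrational β)
    (hβ : 1/2 < β) (hβ1 : β < 1) (hx0 : 0 ≤ x₀) (hx1 : x₀ < 1)
    (c : ℕ) (hc : 1 ≤ c)
    (b p q : ℕ → ℕ) (hb1 : b 1 = 1) (hbpos : ∀ n, 1 ≤ n → 1 ≤ b n)
    (hq0 : q 0 = 1) (hq1 : q 1 = 1)
    (hqrec : ∀ N, q (N + 2) = b (N + 2) * q (N + 1) + q N)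
    (hp0 : p 0 = 0) (hp1 : p 1 = 1)
    (hprec : ∀ N, p (N + 2) = b (N + 2) * p (N + 1) + p N)
    (hcf : Tendsto (fun N => (p N : ℝ) / (q N : ℝ)) atTop (nhds β))
    (w v : List Bool) (hw : IsFactor (sturmianWord β x₀) w)
    (hv : IsFactor (sturmianWord β x₀) v)
    (hpow : FracPow w v) (hr2 : 2 * w.length ≤ v.length) :
    FracPow (phiW c w) (phiW c v ++ List.replicate c true) ∧
    2 * (phiW c w).length ≤ (phiW c v ++ List.replicate c true).length ∧
    IsFactor (phiInf c (sturmianWord β x₀)) (phiW c v ++ List.replicate c true) ∧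
    IsSturmian (phiInf c (sturmianWord β x₀)) ∧
    Tendsto (fun n => ((((List.range n).map (phiInf c (sturmianWord β x₀))).count true : ℝ)) / (n : ℝ))
      atTop (nhds ((c * β + 1 - β) / (c * β + 1))) := by
  have hβ0 : (0:ℝ) < β := by linarith
  have hnoBB : ∀ m, ¬(sturmianWord β x₀ m = false ∧ sturmianWord β x₀ (m+1) = false) :=
    sturmian_noBB β x₀ hβ hβ1
  obtain ⟨iv, hiv⟩ := hv
  have hvget : ∀ i, i < v.length → v[i]? = some (sturmianWord β x₀ (iv + i)) := by
    intro i hi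
    conv_lhs => rw [window_eq hiv]
    rw [List.getElem?_map, List.getElem?_range hi]
    rfl
  have hvBB : ∀ i, i + 1 < v.length →
      ¬(v[i]? = some false ∧ v[i+1]? = some false) := by
    rintro i hi ⟨ha, hb⟩
    rw [hvget i (by omega)] at ha
    rw [hvget (i+1) hi] at hb
    apply hnoBB (iv + i)
    constructor
    · exact Option.some.inj ha
    · rw [show iv + i + 1 = iv + (i+1) by omega]
      exact Option.some.inj hb
  have hC2 := C2 β x₀ hβ hβ1 hx0 hx1 c hc
  have hcβ : (0:ℝ) ≤ (c:ℝ)*β := by positivity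
  have ha0' : 0 < β/((c:ℝ)*β+1) := div_pos hβ0 (by linarith)
  have ha1' : β/((c:ℝ)*β+1) < 1 := by
    rw [div_lt_one (by linarith)]
    linarith
  have hairr : Irrational (β/((c:ℝ)*β+1)) := irr_ap β hirr hβ0 c
  refine ⟨part1 c hpow hr2 hvBB, ?_, ?_, ?_, ?_⟩
  · have := part2 c hpow hr2
    simp only [List.length_append, List.length_replicate]
    omega
  · exact part3 c hnoBB hiv
  · rw [hC2]
    exact codeW_sturmian _ _ hairr ha0' ha1'
  · rw [hC2]
    have hfreq := codeW_freq (β/((c:ℝ)*β+1)) ((1-x₀)/((c:ℝ)*β+1)) ha0' ha1'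
    have hval : 1 - β/((c:ℝ)*β+1) = ((c:ℝ)*β + 1 - β)/((c:ℝ)*β+1) := by
      field_simp
    rw [hval] at hfreq
    exact hfreq


end SturmianPaper
end
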